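/- arXiv:2602.15240 — 3 statements merged into one kernel-verified Lean document; each statement's English description precedes it below -/
import Mathlib

section
/- Let Ω ⊂ ℂⁿ be a pseudoconvex domain. If two hermitian ellipsoids E₀, E₁ (centered at 0) are contained in Ω, then every ellipsoid on the geodesic in the symmetric space of hermitian ellipsoids joining E₀ to E₁ is also contained in Ω. Concretely: if A is the positive h₀-self-adjoint operator with A(E₀) = E₁, then A^t(E₀) ⊂ Ω for all t ∈ [0,1]. -/
open Complex MeasureTheory Bornology

set_option maxHeartbeats 1600000

/-- A positive definite hermitian form on `ℂⁿ` (linear in the first argument,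
conjugate-linear in the second). -/
structure PosDefHermForm (n : ℕ) where
  form : (Fin n → ℂ) → (Fin n → ℂ) → ℂ
  add_left : ∀ z z' w, form (z + z') w = form z w + form z' w
  smul_left : ∀ (a : ℂ) (z w : Fin n → ℂ), form (a • z) w = a * form z w
  conj_symm : ∀ z w, form z w = starRingEnd ℂ (form w z)
  posdef : ∀ z, z ≠ 0 → 0 < (form z z).re

/-- The hermitian ellipsoid `E_h = {z : h(z,z) < 1}`. -/
def PosDefHermForm.ball {n : ℕ} (h : PosDefHermForm n) : Set (Fin n → ℂ) :=
  {z | (h.form z z).re < 1}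

/-- Plurisubharmonicity via the sub-mean-value inequality on complex lines
(the standard characterization for continuous functions). -/
def PlurisubharmonicOn {n : ℕ} (u : (Fin n → ℂ) → ℝ) (Ω : Set (Fin n → ℂ)) : Prop :=
  ∀ (a b : Fin n → ℂ) (r : ℝ), 0 < r →
    (∀ lam : ℂ, ‖lam‖ ≤ r → a + lam • b ∈ Ω) →
    u a ≤ (2 * Real.pi)⁻¹ *
      ∫ t in (0:ℝ)..(2 * Real.pi), u (a + ((r : ℂ) * Complex.exp ((t : ℂ) * Complex.I)) • b)

/-- Pseudoconvexity: an open set admitting a continuous plurisubharmonic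
exhaustion function. -/
def IsPseudoconvex {n : ℕ} (Ω : Set (Fin n → ℂ)) : Prop :=
  IsOpen Ω ∧ ∃ u : (Fin n → ℂ) → ℝ, ContinuousOn u Ω ∧ PlurisubharmonicOn u Ω ∧
    ∀ c : ℝ, IsCompact {z | z ∈ Ω ∧ u z ≤ c}

noncomputable section GeoAux

open Set Metric Filter intervalIntegral
open scoped Convolution

namespace GeoAux

lemma int_cos_zero : ∫ t in (0:ℝ)..(2*Real.pi), Real.cos t = 0 := by
  rw [integral_cos]; simp [Real.sin_two_pi]

lemma int_sin_zero : ∫ t in (0:ℝ)..(2*Real.pi), Real.sin t = 0 := by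
  rw [integral_sin]; simp [Real.cos_two_pi]

lemma int_cos_sq : ∫ t in (0:ℝ)..(2*Real.pi), Real.cos t ^ 2 = Real.pi := by
  rw [integral_cos_sq]; simp [Real.sin_two_pi, Real.cos_two_pi]

lemma int_sin_sq : ∫ t in (0:ℝ)..(2*Real.pi), Real.sin t ^ 2 = Real.pi := by
  rw [integral_sin_sq]; simp [Real.sin_two_pi, Real.cos_two_pi]

lemma int_sin_cos : ∫ t in (0:ℝ)..(2*Real.pi), Real.sin t * Real.cos t = 0 := by
  rw [integral_sin_mul_cos₁]; simp [Real.sin_two_pi]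

/-- Second derivative test: no local max at a point of positive second derivative. -/
lemma not_isLocalMax {g g' g'' : ℝ → ℝ} (h1 : ∀ x, HasDerivAt g (g' x) x)
    (h2 : ∀ x, HasDerivAt g' (g'' x) x) (hpos : 0 < g'' 0) : ¬ IsLocalMax g 0 := by
  intro hmax
  have hg'0 : g' 0 = 0 := by
    have hd := hmax.deriv_eq_zero
    rwa [(h1 0).deriv] at hd
  have hslope : Filter.Tendsto (slope g' 0) (nhdsWithin 0 {(0:ℝ)}ᶜ) (nhds (g'' 0)) :=
    hasDerivAt_iff_tendsto_slope.mp (h2 0)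
  have h1' : ∀ᶠ x in nhdsWithin 0 {(0:ℝ)}ᶜ, 0 < slope g' 0 x :=
    hslope.eventually (eventually_gt_nhds hpos)
  have h2' : ∀ᶠ x in nhdsWithin 0 (Set.Ioi (0:ℝ)), 0 < slope g' 0 x :=
    h1'.filter_mono (nhdsWithin_mono 0 (fun x hx => ne_of_gt hx))
  have hev : ∀ᶠ x in nhdsWithin 0 (Set.Ioi (0:ℝ)), 0 < g' x := by
    filter_upwards [h2', self_mem_nhdsWithin] with x hx hx0
    have hsl : slope g' 0 x = g' x / x := by
      simp [slope_def_field, hg'0]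
    rw [hsl] at hx
    have hxpos : (0:ℝ) < x := hx0
    have := mul_pos hx hxpos
    rwa [div_mul_cancel₀ _ (ne_of_gt hxpos)] at this
  rw [eventually_nhdsWithin_iff, Metric.eventually_nhds_iff] at hev
  obtain ⟨ε, hε, hball⟩ := hev
  have hgc : Continuous g := continuous_iff_continuousAt.mpr fun x => (h1 x).continuousAt
  have hmono : StrictMonoOn g (Set.Icc 0 (ε/2)) := by
    apply strictMonoOn_of_deriv_pos (convex_Icc _ _) hgc.continuousOn
    intro x hx
    rw [interior_Icc] at hx
    rw [(h1 x).deriv]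
    refine hball ?_ hx.1
    rw [Real.dist_eq, sub_zero, abs_of_pos hx.1]
    linarith [hx.2]
  rw [IsLocalMax, IsMaxFilter, Metric.eventually_nhds_iff] at hmax
  obtain ⟨ρ, hρ, hle⟩ := hmax
  set y := min (ε/2) (ρ/2) with hy
  have hy0 : 0 < y := lt_min (by linarith) (by linarith)
  have hyI : y ∈ Set.Icc (0:ℝ) (ε/2) := ⟨le_of_lt hy0, min_le_left _ _⟩
  have h0I : (0:ℝ) ∈ Set.Icc (0:ℝ) (ε/2) := ⟨le_refl _, by linarith⟩
  have hgy : g 0 < g y := hmono h0I hyI hy0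
  have hydist : dist y 0 < ρ := by
    rw [Real.dist_eq, sub_zero, abs_of_pos hy0]
    calc y ≤ ρ/2 := min_le_right _ _
    _ < ρ := by linarith
  exact absurd (hle hydist) (not_le.mpr hgy)

/-- Taylor expansion to second order, with error bound. -/
lemma taylor_bound {g g' g'' : ℝ → ℝ} (h1 : ∀ x, HasDerivAt g (g' x) x)
    (h2 : ∀ x, HasDerivAt g' (g'' x) x) (hcont : Continuous g'') {r δ C : ℝ} (hr : 0 ≤ r)
    (hδ : ∀ s ∈ Set.Icc (0:ℝ) r, |g'' s - C| ≤ δ) (hδ0 : 0 ≤ δ) :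
    |g r - g 0 - r * g' 0 - r^2/2 * C| ≤ r^2/2 * δ := by
  have hg'c : Continuous g' := continuous_iff_continuousAt.mpr fun x => (h2 x).continuousAt
  have hrs : Continuous fun s : ℝ => r - s := by fun_prop
  have hc1 : Continuous fun s => (r - s) * g'' s := hrs.mul hcont
  have hc2 : Continuous fun s => (r - s) * C := hrs.mul continuous_const
  have hIrs : ∫ s in (0:ℝ)..r, (r - s) = r^2/2 := by
    rw [intervalIntegral.integral_comp_sub_left (fun x : ℝ => x) r]
    simp [integral_id]
  have hΦ : ∀ s, HasDerivAt (fun s => g s + (r - s) * g' s) ((r - s) * g'' s) s := by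
    intro s
    have hlin : HasDerivAt (fun s : ℝ => r - s) (-1) s := by
      simpa using ((hasDerivAt_id' s).const_sub r)
    have hp : HasDerivAt (fun s => (r - s) * g' s) ((-1) * g' s + (r - s) * g'' s) s :=
      hlin.mul (h2 s)
    have := (h1 s).add hp
    exact this.congr_deriv (by ring)
  have key : ∫ s in (0:ℝ)..r, (r - s) * g'' s = g r - g 0 - r * g' 0 := by
    rw [intervalIntegral.integral_eq_sub_of_hasDerivAt (fun s _ => hΦ s)
      (hc1.intervalIntegrable _ _)]
    simp
    ring
  have hCint : ∫ s in (0:ℝ)..r, (r - s) * C = r^2/2 * C := by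
    rw [intervalIntegral.integral_mul_const, hIrs]
  have hsplit : g r - g 0 - r * g' 0 - r^2/2 * C
      = ∫ s in (0:ℝ)..r, ((r - s) * g'' s - (r - s) * C) := by
    rw [intervalIntegral.integral_sub (hc1.intervalIntegrable _ _)
      (hc2.intervalIntegrable _ _), key, hCint]
  rw [hsplit]
  refine le_trans (intervalIntegral.abs_integral_le_integral_abs hr) ?_
  have hfin : ∫ s in (0:ℝ)..r, (r - s) * δ = r^2/2 * δ := by
    rw [intervalIntegral.integral_mul_const, hIrs]
  rw [← hfin]
  apply intervalIntegral.integral_mono_on hr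
  · exact (hc1.sub hc2).abs.intervalIntegrable _ _
  · exact (hrs.mul continuous_const).intervalIntegrable _ _
  · intro s hs
    have h1s : (0:ℝ) ≤ r - s := by linarith [hs.2]
    calc |(r - s) * g'' s - (r - s) * C| = (r - s) * |g'' s - C| := by
          rw [← mul_sub, abs_mul, _root_.abs_of_nonneg h1s]
    _ ≤ (r - s) * δ := mul_le_mul_of_nonneg_left (hδ s hs) h1s

/-- Maximum principle on a rectangle. -/
lemma rect_max {w : ℂ → ℝ} (hw : Continuous w) {s2 T : ℝ} (hs : 0 ≤ s2) (hT : 0 < T)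
    (hloc : ∀ lam : ℂ, lam.re ∈ Set.Ioo 0 s2 → lam.im ∈ Set.Ioo (-T) T → ¬ IsLocalMax w lam) :
    ∀ lam : ℂ, lam.re ∈ Set.Icc 0 s2 → lam.im ∈ Set.Icc (-T) T →
      ∃ mu : ℂ, (mu.re ∈ Set.Icc 0 s2 ∧ mu.im ∈ Set.Icc (-T) T) ∧
        (mu.re = 0 ∨ mu.re = s2 ∨ mu.im = -T ∨ mu.im = T) ∧ w lam ≤ w mu := by
  intro lam hre him
  set Q : Set ℂ := {z | z.re ∈ Set.Icc 0 s2 ∧ z.im ∈ Set.Icc (-T) T} with hQ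
  have hQeq : Q = (fun p : ℝ × ℝ => (p.1 : ℂ) + p.2 * Complex.I) ''
      (Set.Icc 0 s2 ×ˢ Set.Icc (-T) T) := by
    ext z
    constructor
    · rintro ⟨hz1, hz2⟩
      exact ⟨(z.re, z.im), ⟨hz1, hz2⟩, by simp [Complex.re_add_im]⟩
    · rintro ⟨p, hp, rfl⟩
      constructor <;> simp [hp.1, hp.2]
  have hQc : IsCompact Q := by
    rw [hQeq]
    exact (isCompact_Icc.prod isCompact_Icc).image (by continuity)
  have hne : Q.Nonempty := ⟨lam, hre, him⟩
  obtain ⟨mu, hmuQ, hmax⟩ := hQc.exists_isMaxOn hne hw.continuousOn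
  by_cases hint : mu.re ∈ Set.Ioo 0 s2 ∧ mu.im ∈ Set.Ioo (-T) T
  · exfalso
    refine hloc mu hint.1 hint.2 ?_
    refine hmax.isLocalMax ?_
    have hopen : IsOpen ((Complex.re ⁻¹' Set.Ioo 0 s2) ∩ (Complex.im ⁻¹' Set.Ioo (-T) T)) :=
      (isOpen_Ioo.preimage Complex.continuous_re).inter
        (isOpen_Ioo.preimage Complex.continuous_im)
    refine Filter.mem_of_superset (hopen.mem_nhds ⟨hint.1, hint.2⟩) ?_
    rintro z ⟨hz1, hz2⟩
    exact ⟨Set.Ioo_subset_Icc_self hz1, Set.Ioo_subset_Icc_self hz2⟩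
  · refine ⟨mu, hmuQ, ?_, hmax ⟨hre, him⟩⟩
    rcases not_and_or.mp hint with hre' | him'
    · rcases hmuQ.1 with ⟨ha, hb⟩
      rcases lt_or_eq_of_le ha with ha' | ha'
      · rcases lt_or_eq_of_le hb with hb' | hb'
        · exact absurd ⟨ha', hb'⟩ hre'
        · exact Or.inr (Or.inl hb')
      · exact Or.inl ha'.symm
    · rcases hmuQ.2 with ⟨ha, hb⟩
      rcases lt_or_eq_of_le ha with ha' | ha'
      · rcases lt_or_eq_of_le hb with hb' | hb'
        · exact absurd ⟨ha', hb'⟩ him'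
        · exact Or.inr (Or.inr (Or.inr hb'))
      · exact Or.inr (Or.inr (Or.inl ha'.symm))

variable {n : ℕ}

lemma line_hasDerivAt1 {v : (Fin n → ℂ) → ℝ} (hv : ContDiff ℝ 2 v)
    {γ : ℝ → (Fin n → ℂ)} {g : Fin n → ℂ} {x : ℝ}
    (hγ : HasDerivAt γ g x) : HasDerivAt (fun s => v (γ s)) (fderiv ℝ v (γ x) g) x := by
  have hd : HasFDerivAt v (fderiv ℝ v (γ x)) (γ x) :=
    ((hv.differentiable (by norm_num)) (γ x)).hasFDerivAt
  exact hd.comp_hasDerivAt x hγ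

lemma line_hasDerivAt2 {v : (Fin n → ℂ) → ℝ} (hv : ContDiff ℝ 2 v)
    {γ γd : ℝ → (Fin n → ℂ)} {g2 : Fin n → ℂ} {x : ℝ}
    (hγ : ∀ s, HasDerivAt γ (γd s) s) (h2 : HasDerivAt γd g2 x) :
    HasDerivAt (fun s => fderiv ℝ v (γ s) (γd s))
      (fderiv ℝ (fderiv ℝ v) (γ x) (γd x) (γd x) + fderiv ℝ v (γ x) g2) x := by
  have hf1 : ContDiff ℝ 1 (fderiv ℝ v) := hv.fderiv_right (by norm_num)
  have hc : HasFDerivAt (fderiv ℝ v) (fderiv ℝ (fderiv ℝ v) (γ x)) (γ x) :=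
    ((hf1.differentiable (by norm_num)) (γ x)).hasFDerivAt
  have hcc : HasDerivAt (fun s => fderiv ℝ v (γ s)) (fderiv ℝ (fderiv ℝ v) (γ x) (γd x)) x :=
    hc.comp_hasDerivAt x (hγ x)
  exact hcc.clm_apply h2

lemma levi_nonneg {v : (Fin n → ℂ) → ℝ} (hv : ContDiff ℝ 2 v) {a bb : Fin n → ℂ} {r₀ : ℝ}
    (hr₀ : 0 < r₀)
    (hsub : ∀ r : ℝ, 0 < r → r ≤ r₀ →
      v a ≤ (2 * Real.pi)⁻¹ *
        ∫ t in (0:ℝ)..(2*Real.pi), v (a + ((r:ℂ) * Complex.exp ((t:ℂ) * Complex.I)) • bb)) :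
    0 ≤ fderiv ℝ (fderiv ℝ v) a bb bb
        + fderiv ℝ (fderiv ℝ v) a (Complex.I • bb) (Complex.I • bb) := by
  by_cases hbb : bb = 0
  · simp [hbb]
  have hπ : (0:ℝ) < Real.pi := Real.pi_pos
  have hB2 : (0:ℝ) < ‖bb‖^2 := pow_pos (norm_pos_iff.mpr hbb) 2
  set f1 := fderiv ℝ v with hf1d
  set f2 := fderiv ℝ (fderiv ℝ v) with hf2d
  set X := f2 a bb bb with hXd
  set W := f2 a (Complex.I • bb) (Complex.I • bb) with hWd
  set Y := f2 a bb (Complex.I • bb) with hYd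
  set Z := f2 a (Complex.I • bb) bb with hZd
  set P1 := f1 a bb with hP1d
  set P2 := f1 a (Complex.I • bb) with hP2d
  have hf2c : Continuous f2 := by
    have h1 : ContDiff ℝ 1 f1 := hv.fderiv_right (by norm_num)
    exact h1.continuous_fderiv (by norm_num)
  have key : ∀ ε₂ : ℝ, 0 < ε₂ → -(2 * ε₂ * ‖bb‖^2) ≤ X + W := by
    intro ε₂ hε₂
    -- continuity of f2 at a
    obtain ⟨ρ, hρpos, hρ⟩ : ∃ ρ > 0, ∀ x, dist x a ≤ ρ → ‖f2 x - f2 a‖ ≤ ε₂ := by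
      have hca : ContinuousAt f2 a := hf2c.continuousAt
      replace hca := (Metric.continuousAt_iff (f := f2) (a := a)).mp hca
      obtain ⟨d, hd, hball⟩ := hca ε₂ hε₂
      refine ⟨d/2, by linarith, fun x hx => ?_⟩
      have h1 : dist x a < d := lt_of_le_of_lt hx (by linarith)
      have h2 := hball h1
      replace h2 : ‖f2 x - f2 a‖ < ε₂ := lt_of_eq_of_lt (dist_eq_norm (f2 x) (f2 a)).symm h2
      exact le_of_lt h2
    set r := min r₀ (ρ/(‖bb‖+1)) with hrd
    have hrpos : 0 < r := lt_min hr₀ (div_pos hρpos (by positivity))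
    have hrr₀ : r ≤ r₀ := min_le_left _ _
    have hrB : r * ‖bb‖ ≤ ρ := by
      have h1 : r ≤ ρ/(‖bb‖+1) := min_le_right _ _
      have h2 : (0:ℝ) < ‖bb‖+1 := by positivity
      calc r * ‖bb‖ ≤ (ρ/(‖bb‖+1)) * ‖bb‖ :=
            mul_le_mul_of_nonneg_right h1 (norm_nonneg _)
      _ ≤ (ρ/(‖bb‖+1)) * (‖bb‖+1) := by
            apply mul_le_mul_of_nonneg_left (by linarith) (by positivity)
      _ = ρ := by field_simp
    set B2 := ‖bb‖^2 with hB2d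
    set c0 := v a + r^2/2*(ε₂*B2) with hc0d
    set c1 := r * P1 with hc1d
    set c2 := r * P2 with hc2d
    set c3 := r^2/2 * X with hc3d
    set c4 := r^2/2 * (Y + Z) with hc4d
    set c5 := r^2/2 * W with hc5d
    set RHSf : ℝ → ℝ := fun t => c0 + c1 * Real.cos t + c2 * Real.sin t
      + c3 * Real.cos t^2 + c4 * (Real.sin t * Real.cos t) + c5 * Real.sin t^2 with hRHSfd
    have hstep : ∀ t : ℝ,
        v (a + ((r:ℂ) * Complex.exp ((t:ℂ) * Complex.I)) • bb) ≤ RHSf t := by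
      intro t
      set e := Complex.exp ((t:ℂ) * Complex.I) with hed
      have hen : ‖e‖ = 1 := by
        rw [hed, Complex.norm_exp]
        simp
      set wt := e • bb with hwtd
      have hwtn : ‖wt‖ = ‖bb‖ := by rw [hwtd, norm_smul, hen, one_mul]
      have hwteq : wt = Real.cos t • bb + Real.sin t • (Complex.I • bb) := by
        rw [hwtd, hed, Complex.exp_mul_I, ← Complex.ofReal_cos, ← Complex.ofReal_sin]
        rw [add_smul, mul_smul]
        rw [← Complex.coe_algebraMap, algebraMap_smul, algebraMap_smul]
      have hγ : ∀ s : ℝ, HasDerivAt (fun s : ℝ => a + s • wt) wt s := by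
        intro s
        simpa using ((hasDerivAt_id s).smul_const wt).const_add a
      have hg1 : ∀ s : ℝ, HasDerivAt (fun s => v (a + s • wt)) (f1 (a + s • wt) wt) s :=
        fun s => line_hasDerivAt1 hv (hγ s)
      have hg2 : ∀ s : ℝ, HasDerivAt (fun s => f1 (a + s • wt) wt)
          (f2 (a + s • wt) wt wt) s := by
        intro s
        have := line_hasDerivAt2 hv (γ := fun s : ℝ => a + s • wt) (γd := fun _ => wt)
          (g2 := 0) hγ (hasDerivAt_const s wt)
        simpa using this
      have hcg2 : Continuous fun s : ℝ => f2 (a + s • wt) wt wt := by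
        have hline : Continuous fun s : ℝ => a + s • wt := by fun_prop
        exact ((hf2c.comp hline).clm_apply continuous_const).clm_apply continuous_const
      have hδb : ∀ s ∈ Set.Icc (0:ℝ) r,
          |f2 (a + s • wt) wt wt - f2 a wt wt| ≤ ε₂ * ‖bb‖^2 := by
        intro s hs
        have hdist : dist (a + s • wt) a ≤ ρ := by
          rw [dist_eq_norm]
          simp only [add_sub_cancel_left]
          rw [norm_smul, hwtn, Real.norm_eq_abs, _root_.abs_of_nonneg hs.1]
          calc s * ‖bb‖ ≤ r * ‖bb‖ := mul_le_mul_of_nonneg_right hs.2 (norm_nonneg _)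
          _ ≤ ρ := hrB
        have h1 : f2 (a + s • wt) wt wt - f2 a wt wt
            = (f2 (a + s • wt) - f2 a) wt wt := by
          simp [ContinuousLinearMap.sub_apply]
        rw [h1]
        rw [← Real.norm_eq_abs]
        calc ‖(f2 (a + s • wt) - f2 a) wt wt‖
            ≤ ‖f2 (a + s • wt) - f2 a‖ * ‖wt‖ * ‖wt‖ :=
              ContinuousLinearMap.le_opNorm₂ _ _ _
        _ ≤ ε₂ * ‖bb‖ * ‖bb‖ := by
              rw [hwtn]
              apply mul_le_mul_of_nonneg_right _ (norm_nonneg _)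
              exact mul_le_mul_of_nonneg_right (hρ _ hdist) (norm_nonneg _)
        _ = ε₂ * ‖bb‖^2 := by ring
      have htb := taylor_bound hg1 hg2 hcg2 (le_of_lt hrpos) hδb (by positivity)
      have h0wt : a + (0:ℝ) • wt = a := by simp
      rw [h0wt] at htb
      have hub : v (a + r • wt) ≤ v a + r * (f1 a wt) + r^2/2 * (f2 a wt wt)
          + r^2/2 * (ε₂ * ‖bb‖^2) := by
        have := (abs_le.mp htb).2
        linarith
      have hpt : a + ((r:ℂ) * e) • bb = a + r • wt := by
        rw [mul_smul, ← hwtd, ← Complex.coe_algebraMap, algebraMap_smul]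
      rw [hpt]
      -- expand the linear and bilinear terms
      have hf1wt : f1 a wt = Real.cos t * P1 + Real.sin t * P2 := by
        rw [hwteq, map_add, ContinuousLinearMap.map_smul, ContinuousLinearMap.map_smul, hP1d, hP2d, smul_eq_mul, smul_eq_mul]
      have hf2wt : f2 a wt wt = Real.cos t * (Real.cos t * X + Real.sin t * Y)
          + Real.sin t * (Real.cos t * Z + Real.sin t * W) := by
        rw [hwteq]
        rw [map_add, ContinuousLinearMap.map_smul, ContinuousLinearMap.map_smul]
        simp only [ContinuousLinearMap.add_apply, ContinuousLinearMap.smul_apply,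
          map_add, ContinuousLinearMap.map_smul, smul_eq_mul]
        rw [hXd, hYd, hZd, hWd]
        ring
      rw [hRHSfd]
      simp only []
      rw [hc0d, hc1d, hc2d, hc3d, hc4d, hc5d]
      calc v (a + r • wt) ≤ v a + r * (f1 a wt) + r^2/2 * (f2 a wt wt)
            + r^2/2 * (ε₂ * ‖bb‖^2) := hub
      _ = v a + r^2/2*(ε₂*B2) + (r * P1) * Real.cos t + (r * P2) * Real.sin t
            + (r^2/2 * X) * Real.cos t^2 + (r^2/2 * (Y+Z)) * (Real.sin t * Real.cos t)
            + (r^2/2 * W) * Real.sin t^2 := by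
          rw [hf1wt, hf2wt, hB2d]
          ring
      _ = _ := by ring
    -- integrate
    have hLHSc : Continuous fun t : ℝ =>
        v (a + ((r:ℂ) * Complex.exp ((t:ℂ) * Complex.I)) • bb) := by
      apply hv.continuous.comp
      fun_prop
    have hRHSc : Continuous RHSf := by
      rw [hRHSfd]; fun_prop
    have h2π : (0:ℝ) < 2*Real.pi := by positivity
    have hIle : 2*Real.pi * v a
        ≤ ∫ t in (0:ℝ)..(2*Real.pi), v (a + ((r:ℂ) * Complex.exp ((t:ℂ) * Complex.I)) • bb) := by
      have hh := hsub r hrpos hrr₀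
      calc 2*Real.pi * v a ≤ 2*Real.pi * ((2*Real.pi)⁻¹ *
            ∫ t in (0:ℝ)..(2*Real.pi), v (a + ((r:ℂ) * Complex.exp ((t:ℂ) * Complex.I)) • bb)) :=
            mul_le_mul_of_nonneg_left hh (le_of_lt h2π)
      _ = _ := by
            rw [← mul_assoc, mul_inv_cancel₀ (ne_of_gt h2π), one_mul]
    have hmono : (∫ t in (0:ℝ)..(2*Real.pi),
          v (a + ((r:ℂ) * Complex.exp ((t:ℂ) * Complex.I)) • bb))
        ≤ ∫ t in (0:ℝ)..(2*Real.pi), RHSf t := by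
      apply intervalIntegral.integral_mono_on (le_of_lt h2π)
        (hLHSc.intervalIntegrable _ _) (hRHSc.intervalIntegrable _ _)
      intro t _
      exact hstep t
    have i1 : ∫ t in (0:ℝ)..(2*Real.pi), c1 * Real.cos t = 0 := by
      rw [intervalIntegral.integral_const_mul, int_cos_zero, mul_zero]
    have i2 : ∫ t in (0:ℝ)..(2*Real.pi), c2 * Real.sin t = 0 := by
      rw [intervalIntegral.integral_const_mul, int_sin_zero, mul_zero]
    have i3 : ∫ t in (0:ℝ)..(2*Real.pi), c3 * Real.cos t^2 = c3 * Real.pi := by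
      rw [intervalIntegral.integral_const_mul, int_cos_sq]
    have i4 : ∫ t in (0:ℝ)..(2*Real.pi), c4 * (Real.sin t * Real.cos t) = 0 := by
      rw [intervalIntegral.integral_const_mul, int_sin_cos, mul_zero]
    have i5 : ∫ t in (0:ℝ)..(2*Real.pi), c5 * Real.sin t^2 = c5 * Real.pi := by
      rw [intervalIntegral.integral_const_mul, int_sin_sq]
    have i0 : ∫ t in (0:ℝ)..(2*Real.pi), (fun _ : ℝ => c0) t = 2*Real.pi * c0 := by
      rw [intervalIntegral.integral_const, smul_eq_mul]
      ring
    have hITot : ∫ t in (0:ℝ)..(2*Real.pi), RHSf t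
        = 2*Real.pi*c0 + c3*Real.pi + c5*Real.pi := by
      rw [hRHSfd]
      rw [intervalIntegral.integral_add
        (((by fun_prop : Continuous fun t : ℝ => c0 + c1 * Real.cos t + c2 * Real.sin t
          + c3 * Real.cos t^2 + c4 * (Real.sin t * Real.cos t))).intervalIntegrable _ _)
        ((by fun_prop : Continuous fun t : ℝ => c5 * Real.sin t^2).intervalIntegrable _ _)]
      rw [intervalIntegral.integral_add
        (((by fun_prop : Continuous fun t : ℝ => c0 + c1 * Real.cos t + c2 * Real.sin t
          + c3 * Real.cos t^2)).intervalIntegrable _ _)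
        ((by fun_prop : Continuous fun t : ℝ =>
          c4 * (Real.sin t * Real.cos t)).intervalIntegrable _ _)]
      rw [intervalIntegral.integral_add
        (((by fun_prop : Continuous fun t : ℝ => c0 + c1 * Real.cos t
          + c2 * Real.sin t)).intervalIntegrable _ _)
        ((by fun_prop : Continuous fun t : ℝ => c3 * Real.cos t^2).intervalIntegrable _ _)]
      rw [intervalIntegral.integral_add
        (((by fun_prop : Continuous fun t : ℝ => c0 + c1 * Real.cos t)).intervalIntegrable _ _)
        ((by fun_prop : Continuous fun t : ℝ => c2 * Real.sin t).intervalIntegrable _ _)]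
      rw [intervalIntegral.integral_add
        ((continuous_const :  Continuous fun _ : ℝ => c0).intervalIntegrable _ _)
        ((by fun_prop : Continuous fun t : ℝ => c1 * Real.cos t).intervalIntegrable _ _)]
      rw [i0, i1, i2, i3, i4, i5]
      ring
    have hfinal := le_trans hIle (le_trans hmono (le_of_eq hITot))
    have hexp : 2*Real.pi*c0 + c3*Real.pi + c5*Real.pi
        = 2*Real.pi*(v a) + Real.pi*(r^2/2)*((X+W) + 2*ε₂*B2) := by
      rw [hc0d, hc3d, hc5d]
      ring
    rw [hexp] at hfinal
    have hposc : 0 < Real.pi*(r^2/2) := by positivity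
    by_contra hcon
    push_neg at hcon
    have hneg2 : Real.pi*(r^2/2)*((X+W) + 2*ε₂*B2) < 0 := by
      apply mul_neg_of_pos_of_neg hposc
      linarith
    linarith
  -- conclude
  by_contra hneg
  push_neg at hneg
  have hε₂ : (0:ℝ) < -(X+W)/(4*‖bb‖^2) := div_pos (by linarith) (by positivity)
  have hk := key _ hε₂
  have heq : -(2 * (-(X+W)/(4*‖bb‖^2)) * ‖bb‖^2) = (X+W)/2 := by
    field_simp
    ring
  rw [heq] at hk
  linarith


lemma strip_bound {Ω : Set (Fin n → ℂ)} (hΩo : IsOpen Ω) {u : (Fin n → ℂ) → ℝ}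
    (hu : ContinuousOn u Ω) (hps : PlurisubharmonicOn u Ω)
    (G G₁ G₂ : ℂ → (Fin n → ℂ)) (hGc : Continuous G) (hG1c : Continuous G₁)
    (hGx : ∀ (l : ℂ) (x : ℝ), HasDerivAt (fun s : ℝ => G (l + s)) (G₁ (l + x)) x)
    (hGy : ∀ (l : ℂ) (y : ℝ),
      HasDerivAt (fun s : ℝ => G (l + s * Complex.I)) (Complex.I • G₁ (l + y * Complex.I)) y)
    (hG1x : ∀ (l : ℂ) (x : ℝ), HasDerivAt (fun s : ℝ => G₁ (l + s)) (G₂ (l + x)) x)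
    (hG1y : ∀ (l : ℂ) (y : ℝ),
      HasDerivAt (fun s : ℝ => G₁ (l + s * Complex.I)) (Complex.I • G₂ (l + y * Complex.I)) y)
    {Y' K : Set (Fin n → ℂ)} (hY'c : IsCompact Y') (hY'Ω : Y' ⊆ Ω)
    (hrange : ∀ l : ℂ, l.re ∈ Set.Icc (0:ℝ) 1 → G l ∈ Y')
    (hKc : IsCompact K) (hbd : ∀ l : ℂ, (l.re = 0 ∨ l.re = 1) → G l ∈ K)
    {δ₀ M₀ : ℝ} (hδ₀ : 0 < δ₀) (hN : Metric.cthickening δ₀ K ⊆ Ω)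
    (hM : ∀ x ∈ Metric.cthickening δ₀ K, u x ≤ M₀) :
    ∀ s₀ : ℝ, s₀ ∈ Set.Icc (0:ℝ) 1 → u (G (s₀ : ℂ)) ≤ M₀ := by
  intro s₀ hs₀
  have h2π : (0:ℝ) < 2*Real.pi := by positivity
  obtain ⟨δ₁, hδ₁pos, hδ₁⟩ := hY'c.exists_cthickening_subset_open hΩo hY'Ω
  set δ := min δ₁ δ₀ with hδd
  have hδpos : 0 < δ := lt_min hδ₁pos hδ₀
  have hδδ₁ : δ ≤ δ₁ := min_le_left _ _
  have hδδ₀ : δ ≤ δ₀ := min_le_right _ _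
  set N : Set (Fin n → ℂ) := Metric.cthickening δ₁ Y' ∪ Metric.cthickening δ₀ K with hNd
  have hNc : IsCompact N := (hY'c.cthickening).union (hKc.cthickening)
  have hNΩ : N ⊆ Ω := Set.union_subset hδ₁ hN
  have hNcl : IsClosed N := hNc.isClosed
  -- Tietze extension of u from N
  obtain ⟨uh, huh⟩ := ContinuousMap.exists_restrict_eq (Y := ℝ) hNcl
    ⟨N.restrict u, (hu.mono hNΩ).restrict⟩
  have huhu : ∀ x ∈ N, uh x = u x := by
    intro x hx
    exact congrFun (congrArg ContinuousMap.toFun huh) ⟨x, hx⟩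
  have huhc : Continuous uh := uh.continuous
  -- a-priori bound on the Y'-thickening
  have hY'ne : (Y' : Set (Fin n → ℂ)).Nonempty := ⟨G 0, hrange 0 (by simp)⟩
  obtain ⟨CY, hCY⟩ := (hY'c.cthickening (r := δ₁)).exists_bound_of_continuousOn
    huhc.continuousOn
  set B : ℝ := max M₀ CY with hBd
  have hBY : ∀ x ∈ Metric.cthickening δ₁ Y', uh x ≤ B := by
    intro x hx
    calc uh x ≤ |uh x| := le_abs_self _
    _ = ‖uh x‖ := (Real.norm_eq_abs _).symm
    _ ≤ CY := hCY x hx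
    _ ≤ B := le_max_right _ _
  have hMB : M₀ ≤ B := le_max_left _ _
  -- reduce to ε'-approximation
  refine le_of_forall_pos_le_add ?_
  intro ε' hε'
  set η := ε'/4 with hηd
  have hηpos : 0 < η := by positivity
  set p := G ((s₀:ℝ):ℂ) with hpd
  have hpY : p ∈ Y' := hrange _ (by simpa using hs₀)
  have hpN : p ∈ N := Or.inl (Metric.self_subset_cthickening _ hpY)
  obtain ⟨ε₁, hε₁pos, hε₁⟩ : ∃ e > 0, ∀ y, dist y p ≤ e → |uh y - uh p| ≤ ε'/4 := by
    have hca : ContinuousAt uh p := huhc.continuousAt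
    rw [Metric.continuousAt_iff] at hca
    obtain ⟨d, hd, hball⟩ := hca (ε'/4) (by positivity)
    refine ⟨d/2, by linarith, fun y hy => ?_⟩
    have h1 : dist y p < d := lt_of_le_of_lt hy (by linarith)
    have h2 := hball h1
    rw [Real.dist_eq] at h2
    exact le_of_lt h2
  set ε := min (min (δ/4) ε₁) 1 with hεd
  have hεpos : 0 < ε := lt_min (lt_min (by positivity) hε₁pos) one_pos
  have hεδ : ε ≤ δ/4 := le_trans (min_le_left _ _) (min_le_left _ _)
  have hεε₁ : ε ≤ ε₁ := le_trans (min_le_left _ _) (min_le_right _ _)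
  -- the bump and mollification
  set φ : ContDiffBump (0 : Fin n → ℂ) := ⟨ε/2, ε, by positivity, by linarith⟩ with hφd
  set ψ : (Fin n → ℂ) → ℝ := φ.normed volume with hψd
  have hψc : Continuous ψ := φ.continuous_normed
  have hψnn : ∀ y, 0 ≤ ψ y := fun y => φ.nonneg_normed y
  have hψ1 : ∫ y, ψ y = 1 := φ.integral_normed
  have hψ0 : ∀ y : Fin n → ℂ, ε ≤ ‖y‖ → ψ y = 0 := by
    intro y hy
    have : y ∉ Function.support (φ.normed volume) := by
      rw [φ.support_normed_eq]
      intro hmem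
      rw [Metric.mem_ball, dist_zero_right] at hmem
      exact absurd hy (not_le.mpr hmem)
    simpa [hψd] using Function.notMem_support.mp this
  have hψint : Integrable ψ volume := φ.integrable_normed
  set uε : (Fin n → ℂ) → ℝ := fun x => ∫ y, ψ y * uh (x - y) with huεd
  have huεconv : uε = (φ.normed volume) ⋆[ContinuousLinearMap.lsmul ℝ ℝ, volume] uh := by
    funext x
    rw [convolution_def]
    simp [hψd, huεd, ContinuousLinearMap.lsmul_apply, smul_eq_mul]
  have hsm : ContDiff ℝ 2 uε := by
    rw [huεconv]
    exact HasCompactSupport.contDiff_convolution_left _ φ.hasCompactSupport_normed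
      φ.contDiff_normed huhc.locallyIntegrable
  -- integrability of the integrand defining uε
  have hintx : ∀ x : Fin n → ℂ, Integrable (fun y => ψ y * uh (x - y)) volume := by
    intro x
    obtain ⟨Cx, hCx⟩ := (isCompact_closedBall x ε).exists_bound_of_continuousOn
      huhc.continuousOn
    have hCx0 : 0 ≤ Cx := le_trans (norm_nonneg _) (hCx x (Metric.mem_closedBall_self hεpos.le))
    apply Integrable.mono' (hψint.const_mul Cx)
    · exact (hψc.mul (huhc.comp (continuous_const.sub continuous_id))).aestronglyMeasurable
    · refine Filter.Eventually.of_forall (fun y => ?_)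
      by_cases hy : ε ≤ ‖y‖
      · simp [hψ0 y hy]
      · push_neg at hy
        have hmem : x - y ∈ Metric.closedBall x ε := by
          rw [Metric.mem_closedBall, dist_eq_norm]
          simpa using hy.le
        rw [Real.norm_eq_abs, abs_mul, _root_.abs_of_nonneg (hψnn y)]
        calc ψ y * |uh (x - y)| ≤ ψ y * Cx := by
              apply mul_le_mul_of_nonneg_left _ (hψnn y)
              rw [← Real.norm_eq_abs]
              exact hCx _ hmem
        _ = Cx * ψ y := by ring
  -- upper bound for uε from local upper bound for uh
  have hconv_le : ∀ (x : Fin n → ℂ) (Bv : ℝ),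
      (∀ y ∈ Metric.closedBall x ε, uh y ≤ Bv) → uε x ≤ Bv := by
    intro x Bv hBv
    have hle : ∀ y, ψ y * uh (x - y) ≤ ψ y * Bv := by
      intro y
      by_cases hy : ε ≤ ‖y‖
      · simp [hψ0 y hy]
      · push_neg at hy
        apply mul_le_mul_of_nonneg_left _ (hψnn y)
        apply hBv
        rw [Metric.mem_closedBall, dist_eq_norm]
        simpa using hy.le
    calc uε x ≤ ∫ y, ψ y * Bv := integral_mono (hintx x) (hψint.mul_const Bv) hle
    _ = (∫ y, ψ y) * Bv := by rw [MeasureTheory.integral_mul_const]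
    _ = Bv := by rw [hψ1, one_mul]
  -- lower bound
  have hconv_ge : ∀ (x : Fin n → ℂ) (Bv : ℝ),
      (∀ y ∈ Metric.closedBall x ε, Bv ≤ uh y) → Bv ≤ uε x := by
    intro x Bv hBv
    have hle : ∀ y, ψ y * Bv ≤ ψ y * uh (x - y) := by
      intro y
      by_cases hy : ε ≤ ‖y‖
      · simp [hψ0 y hy]
      · push_neg at hy
        apply mul_le_mul_of_nonneg_left _ (hψnn y)
        apply hBv
        rw [Metric.mem_closedBall, dist_eq_norm]
        simpa using hy.le
    calc Bv = (∫ y, ψ y) * Bv := by rw [hψ1, one_mul]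
    _ = ∫ y, ψ y * Bv := by rw [MeasureTheory.integral_mul_const]
    _ ≤ uε x := integral_mono (hψint.mul_const Bv) (hintx x) hle
  -- submean property for the mollification near Y'
  have hsubε : ∀ aa ∈ Y', ∀ (bb : Fin n → ℂ) (r : ℝ), 0 < r → r * ‖bb‖ + ε ≤ δ →
      uε aa ≤ (2*Real.pi)⁻¹ * ∫ t in (0:ℝ)..(2*Real.pi),
        uε (aa + ((r:ℂ) * Complex.exp ((t:ℂ) * Complex.I)) • bb) := by
    intro aa haa bb r hr hrδ
    have hpts : ∀ (y : Fin n → ℂ) (lam : ℂ), ‖y‖ ≤ ε → ‖lam‖ ≤ r →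
        aa - y + lam • bb ∈ Metric.cthickening δ₁ Y' := by
      intro y lam hy hlam
      apply Metric.mem_cthickening_of_dist_le _ aa δ₁ Y' haa
      have heq : aa - y + lam • bb - aa = lam • bb - y := by abel
      rw [dist_eq_norm, heq]
      calc ‖lam • bb - y‖ ≤ ‖lam • bb‖ + ‖y‖ := norm_sub_le _ _
      _ = ‖lam‖ * ‖bb‖ + ‖y‖ := by rw [norm_smul]
      _ ≤ r * ‖bb‖ + ε :=
            add_le_add (mul_le_mul_of_nonneg_right hlam (norm_nonneg _)) hy
      _ ≤ δ := hrδ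
      _ ≤ δ₁ := hδδ₁
    have hptsN : ∀ (y : Fin n → ℂ) (lam : ℂ), ‖y‖ ≤ ε → ‖lam‖ ≤ r →
        aa - y + lam • bb ∈ N := fun y lam hy hlam => Or.inl (hpts y lam hy hlam)
    have hptsΩ : ∀ (y : Fin n → ℂ) (lam : ℂ), ‖y‖ ≤ ε → ‖lam‖ ≤ r →
        aa - y + lam • bb ∈ Ω := fun y lam hy hlam => hδ₁ (hpts y lam hy hlam)
    set cp : ℝ → ℂ := fun t => (r:ℂ) * Complex.exp ((t:ℂ) * Complex.I) with hcpd
    have hcpabs : ∀ t, ‖cp t‖ ≤ r := by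
      intro t
      rw [hcpd]
      simp only [norm_mul, Complex.norm_real, Complex.norm_exp]
      simp [_root_.abs_of_pos hr]
    set F : ℝ × (Fin n → ℂ) → ℝ := fun q => ψ q.2 * uh (aa + cp q.1 • bb - q.2) with hFd
    have hFc : Continuous F := by
      apply Continuous.mul (hψc.comp continuous_snd)
      apply huhc.comp
      fun_prop
    obtain ⟨CN, hCN⟩ := (hY'c.cthickening (r := δ₁)).exists_bound_of_continuousOn
      huhc.continuousOn
    have hCN0 : 0 ≤ CN :=
      le_trans (norm_nonneg _) (hCN aa (Metric.self_subset_cthickening _ haa))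
    set μt := volume.restrict (Set.Ioc (0:ℝ) (2*Real.pi)) with hμtd
    have hdom : Integrable (fun q : ℝ × (Fin n → ℂ) => CN * ψ q.2) (μt.prod volume) := by
      have h1 : Integrable (fun _ : ℝ => CN) μt := by
        rw [hμtd]
        exact integrableOn_const measure_Ioc_lt_top.ne
      exact h1.mul_prod hψint
    have hFint : Integrable F (μt.prod volume) := by
      apply Integrable.mono' hdom hFc.aestronglyMeasurable
      refine Filter.Eventually.of_forall (fun q => ?_)
      by_cases hy : ε ≤ ‖q.2‖
      · simp [hFd, hψ0 _ hy, mul_nonneg hCN0 (hψnn q.2)]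
      · push_neg at hy
        have hmem : aa + cp q.1 • bb - q.2 ∈ Metric.cthickening δ₁ Y' := by
          have heq : aa + cp q.1 • bb - q.2 = aa - q.2 + cp q.1 • bb := by abel
          rw [heq]
          exact hpts _ _ hy.le (hcpabs _)
        rw [hFd]
        simp only [Real.norm_eq_abs]
        rw [abs_mul, _root_.abs_of_nonneg (hψnn _)]
        calc ψ q.2 * |uh (aa + cp q.1 • bb - q.2)| ≤ ψ q.2 * CN := by
              apply mul_le_mul_of_nonneg_left _ (hψnn _)
              rw [← Real.norm_eq_abs]
              exact hCN _ hmem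
        _ = CN * ψ q.2 := by ring
    have hIoc : ∫ t in (0:ℝ)..(2*Real.pi), uε (aa + cp t • bb)
        = ∫ t, (∫ y, F (t, y)) ∂μt := by
      rw [intervalIntegral.integral_of_le (le_of_lt h2π)]
    have hswap : ∫ t, (∫ y, F (t, y)) ∂μt = ∫ y, (∫ t, F (t, y) ∂μt) :=
      integral_integral_swap hFint
    have hinner : ∀ y : Fin n → ℂ, (2*Real.pi) * (ψ y * uh (aa - y)) ≤ ∫ t, F (t, y) ∂μt := by
      intro y
      by_cases hy : ε ≤ ‖y‖
      · have hzero : ∀ t, F (t, y) = 0 := fun t => by simp [hFd, hψ0 _ hy]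
        simp [hψ0 _ hy, hzero]
      · push_neg at hy
        have hu1 : u (aa - y) ≤ (2*Real.pi)⁻¹ * ∫ t in (0:ℝ)..(2*Real.pi),
            u (aa - y + ((r:ℂ) * Complex.exp ((t:ℂ) * Complex.I)) • bb) := by
          apply hps (aa - y) bb r hr
          intro lam hlam
          exact hptsΩ y lam hy.le hlam
        have hcongr : ∫ t in (0:ℝ)..(2*Real.pi),
              u (aa - y + ((r:ℂ) * Complex.exp ((t:ℂ) * Complex.I)) • bb)
            = ∫ t in (0:ℝ)..(2*Real.pi), uh (aa - y + cp t • bb) := by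
          apply intervalIntegral.integral_congr
          intro t _
          exact (huhu _ (hptsN y (cp t) hy.le (hcpabs t))).symm
        have huhaa : uh (aa - y) = u (aa - y) := by
          have hmem : aa - y ∈ N := by
            have := hptsN y 0 hy.le (by simp [hr.le])
            simpa using this
          exact huhu _ hmem
        have hinner2 : (2*Real.pi) * uh (aa - y)
            ≤ ∫ t in (0:ℝ)..(2*Real.pi), uh (aa - y + cp t • bb) := by
          rw [huhaa]
          calc (2*Real.pi) * u (aa - y)
              ≤ (2*Real.pi) * ((2*Real.pi)⁻¹ * ∫ t in (0:ℝ)..(2*Real.pi),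
                u (aa - y + ((r:ℂ) * Complex.exp ((t:ℂ) * Complex.I)) • bb)) :=
                mul_le_mul_of_nonneg_left hu1 (le_of_lt h2π)
          _ = ∫ t in (0:ℝ)..(2*Real.pi),
                u (aa - y + ((r:ℂ) * Complex.exp ((t:ℂ) * Complex.I)) • bb) := by
                rw [← mul_assoc, mul_inv_cancel₀ (ne_of_gt h2π), one_mul]
          _ = _ := hcongr
        have he1 : ∀ t : ℝ, F (t, y) = ψ y * uh (aa - y + cp t • bb) := by
          intro t
          have hveq : aa + cp t • bb - y = aa - y + cp t • bb := by abel
          simp only [hFd, hveq]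
        have hF2 : ∫ t, F (t, y) ∂μt
            = ψ y * ∫ t in (0:ℝ)..(2*Real.pi), uh (aa - y + cp t • bb) := by
          calc ∫ t, F (t, y) ∂μt = ∫ t, ψ y * uh (aa - y + cp t • bb) ∂μt :=
                integral_congr_ae (Filter.Eventually.of_forall he1)
          _ = ψ y * ∫ t, uh (aa - y + cp t • bb) ∂μt := integral_const_mul _ _
          _ = ψ y * ∫ t in (0:ℝ)..(2*Real.pi), uh (aa - y + cp t • bb) := by
                rw [intervalIntegral.integral_of_le (le_of_lt h2π), hμtd]
        rw [hF2]
        calc (2*Real.pi) * (ψ y * uh (aa - y)) = ψ y * ((2*Real.pi) * uh (aa - y)) := by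
              ring
        _ ≤ _ := mul_le_mul_of_nonneg_left hinner2 (hψnn y)
    have hLHSint : Integrable (fun y => (2*Real.pi) * (ψ y * uh (aa - y))) volume :=
      (hintx aa).const_mul _
    have hRHSint : Integrable (fun y => ∫ t, F (t, y) ∂μt) volume :=
      hFint.integral_prod_right
    have hmono2 : (∫ y, (2*Real.pi) * (ψ y * uh (aa - y)))
        ≤ ∫ y, (∫ t, F (t, y) ∂μt) := integral_mono hLHSint hRHSint hinner
    have hfinal : (2*Real.pi) * uε aa ≤ ∫ t in (0:ℝ)..(2*Real.pi), uε (aa + cp t • bb) := by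
      rw [hIoc, hswap]
      calc (2*Real.pi) * uε aa = ∫ y, (2*Real.pi) * (ψ y * uh (aa - y)) := by
            rw [MeasureTheory.integral_const_mul]
      _ ≤ _ := hmono2
    calc uε aa = (2*Real.pi)⁻¹ * ((2*Real.pi) * uε aa) := by
          field_simp
    _ ≤ (2*Real.pi)⁻¹ * ∫ t in (0:ℝ)..(2*Real.pi), uε (aa + cp t • bb) :=
          mul_le_mul_of_nonneg_left hfinal (by positivity)
  -- Levi form of the mollification is nonnegative on Y'
  set f1 := fderiv ℝ uε with hf1d
  set f2 := fderiv ℝ (fderiv ℝ uε) with hf2d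
  have hQ : ∀ aa ∈ Y', ∀ bb : Fin n → ℂ,
      0 ≤ f2 aa bb bb + f2 aa (Complex.I • bb) (Complex.I • bb) := by
    intro aa haa bb
    apply levi_nonneg hsm (r₀ := δ/(4*(‖bb‖+1))) (by positivity)
    intro r hrp hrr
    apply hsubε aa haa bb r hrp
    have h1 : r * ‖bb‖ ≤ δ/4 := by
      calc r * ‖bb‖ ≤ (δ/(4*(‖bb‖+1))) * ‖bb‖ :=
            mul_le_mul_of_nonneg_right hrr (norm_nonneg _)
      _ ≤ (δ/(4*(‖bb‖+1))) * (‖bb‖+1) := by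
            apply mul_le_mul_of_nonneg_left (by linarith) (by positivity)
      _ = δ/4 := by field_simp
    have h2 : ε ≤ δ/4 := hεδ
    linarith
  -- choice of the window height T
  set T := Real.sqrt (max 1 ((B - M₀)/η)) with hTd
  have hT1 : 1 ≤ T := by
    rw [hTd]
    calc (1:ℝ) = Real.sqrt 1 := Real.sqrt_one.symm
    _ ≤ _ := Real.sqrt_le_sqrt (le_max_left _ _)
  have hTpos : 0 < T := lt_of_lt_of_le one_pos hT1
  have hT2 : B - M₀ ≤ η * T^2 := by
    have hmax0 : (0:ℝ) ≤ max 1 ((B - M₀)/η) := le_trans zero_le_one (le_max_left _ _)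
    rw [hTd, Real.sq_sqrt hmax0]
    calc B - M₀ = η * ((B - M₀)/η) := by field_simp
    _ ≤ η * max 1 ((B - M₀)/η) := mul_le_mul_of_nonneg_left (le_max_right _ _) hηpos.le
  -- comparison function
  set w : ℂ → ℝ := fun lam => uε (G lam) + η * (2*lam.re^2 - lam.im^2) with hwd
  have hwc : Continuous w := by
    apply Continuous.add (hsm.continuous.comp hGc)
    fun_prop
  -- no interior local maximum
  have hloc : ∀ lam : ℂ, lam.re ∈ Set.Ioo (0:ℝ) 1 → lam.im ∈ Set.Ioo (-T) T →
      ¬ IsLocalMax w lam := by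
    intro lam hre him hmax
    have haaY : G lam ∈ Y' := hrange lam ⟨hre.1.le, hre.2.le⟩
    have haxis : ∀ k : ℝ → ℂ, Continuous k → k 0 = lam →
        IsLocalMax (fun x => w (k x)) 0 := by
      intro k hk h0
      have hkt : Filter.Tendsto k (nhds 0) (nhds lam) := by
        have hh := hk.continuousAt (x := (0:ℝ))
        rwa [ContinuousAt, h0] at hh
      have hev := hkt.eventually hmax
      show ∀ᶠ x in nhds (0:ℝ), w (k x) ≤ w (k 0)
      simp only [h0]
      exact hev
    -- x-direction
    have hwx : (fun x : ℝ => w (lam + (x:ℂ))) =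
        fun x : ℝ => uε (G (lam + (x:ℂ))) + ((2*η) * (lam.re + x)^2 - η * lam.im^2) := by
      funext x
      rw [hwd]
      simp only [Complex.add_re, Complex.ofReal_re, Complex.add_im, Complex.ofReal_im, add_zero]
      ring
    have hd1 : ∀ x : ℝ, HasDerivAt (fun x : ℝ => uε (G (lam + (x:ℂ))))
        (f1 (G (lam + (x:ℂ))) (G₁ (lam + (x:ℂ)))) x :=
      fun x => line_hasDerivAt1 hsm (hGx lam x)
    have hd2 : ∀ x : ℝ, HasDerivAt
        (fun x : ℝ => (2*η) * (lam.re + x)^2 - η * lam.im^2) ((2*η) * (2*(lam.re + x))) x := by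
      intro x
      have h0 : HasDerivAt (fun x : ℝ => lam.re + x) 1 x := (hasDerivAt_id x).const_add lam.re
      have h1 := ((h0.pow 2).const_mul (2*η)).sub_const (η * lam.im^2)
      exact h1.congr_deriv (by push_cast; ring)
    have hd3 : ∀ x : ℝ, HasDerivAt (fun x : ℝ => f1 (G (lam + (x:ℂ))) (G₁ (lam + (x:ℂ))))
        (f2 (G (lam + (x:ℂ))) (G₁ (lam + (x:ℂ))) (G₁ (lam + (x:ℂ)))
          + f1 (G (lam + (x:ℂ))) (G₂ (lam + (x:ℂ)))) x :=
      fun x => line_hasDerivAt2 hsm (fun s => hGx lam s) (hG1x lam x)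
    have hd4 : ∀ x : ℝ, HasDerivAt (fun x : ℝ => (2*η) * (2*(lam.re + x))) ((2*η)*2) x := by
      intro x
      have h0 : HasDerivAt (fun x : ℝ => lam.re + x) 1 x := (hasDerivAt_id x).const_add lam.re
      have h1 := (h0.const_mul (2:ℝ)).const_mul (2*η)
      exact h1.congr_deriv (by ring)
    set gx' : ℝ → ℝ := fun x => f1 (G (lam + (x:ℂ))) (G₁ (lam + (x:ℂ)))
      + (2*η) * (2*(lam.re + x)) with hgx'd
    set gx'' : ℝ → ℝ := fun x => f2 (G (lam + (x:ℂ))) (G₁ (lam + (x:ℂ))) (G₁ (lam + (x:ℂ)))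
      + f1 (G (lam + (x:ℂ))) (G₂ (lam + (x:ℂ))) + (2*η)*2 with hgx''d
    have hgx : ∀ x, HasDerivAt (fun x : ℝ => w (lam + (x:ℂ))) (gx' x) x := by
      intro x
      rw [hwx]
      exact (hd1 x).add (hd2 x)
    have hgxp : ∀ x, HasDerivAt gx' (gx'' x) x := fun x => (hd3 x).add (hd4 x)
    -- y-direction
    have hwy : (fun y : ℝ => w (lam + (y:ℂ) * Complex.I)) =
        fun y : ℝ => uε (G (lam + (y:ℂ) * Complex.I)) + ((2*η)*lam.re^2 - η * (lam.im + y)^2) := by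
      funext y
      rw [hwd]
      simp only [Complex.add_re, Complex.add_im, Complex.mul_re, Complex.mul_im,
        Complex.ofReal_re, Complex.ofReal_im, Complex.I_re, Complex.I_im]
      ring
    have he1 : ∀ y : ℝ, HasDerivAt (fun y : ℝ => uε (G (lam + (y:ℂ) * Complex.I)))
        (f1 (G (lam + (y:ℂ) * Complex.I)) (Complex.I • G₁ (lam + (y:ℂ) * Complex.I))) y :=
      fun y => line_hasDerivAt1 hsm (hGy lam y)
    have he2 : ∀ y : ℝ, HasDerivAt
        (fun y : ℝ => (2*η)*lam.re^2 - η * (lam.im + y)^2) (-(η * (2*(lam.im + y)))) y := by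
      intro y
      have h0 : HasDerivAt (fun y : ℝ => lam.im + y) 1 y := (hasDerivAt_id y).const_add lam.im
      have h1 := ((h0.pow 2).const_mul η).const_sub ((2*η)*lam.re^2)
      exact h1.congr_deriv (by push_cast; ring)
    have he3 : ∀ y : ℝ, HasDerivAt
        (fun y : ℝ => f1 (G (lam + (y:ℂ) * Complex.I)) (Complex.I • G₁ (lam + (y:ℂ) * Complex.I)))
        (f2 (G (lam + (y:ℂ) * Complex.I)) (Complex.I • G₁ (lam + (y:ℂ) * Complex.I))
            (Complex.I • G₁ (lam + (y:ℂ) * Complex.I))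
          + f1 (G (lam + (y:ℂ) * Complex.I))
            (Complex.I • (Complex.I • G₂ (lam + (y:ℂ) * Complex.I)))) y :=
      fun y => line_hasDerivAt2 hsm (fun s => hGy lam s) ((hG1y lam y).const_smul Complex.I)
    have he4 : ∀ y : ℝ, HasDerivAt (fun y : ℝ => -(η * (2*(lam.im + y)))) (-(η*2)) y := by
      intro y
      have h0 : HasDerivAt (fun y : ℝ => lam.im + y) 1 y := (hasDerivAt_id y).const_add lam.im
      have h1 := ((h0.const_mul (2:ℝ)).const_mul η).neg
      exact h1.congr_deriv (by ring)
    set gy' : ℝ → ℝ := fun y => f1 (G (lam + (y:ℂ) * Complex.I))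
        (Complex.I • G₁ (lam + (y:ℂ) * Complex.I)) + (-(η * (2*(lam.im + y)))) with hgy'd
    set gy'' : ℝ → ℝ := fun y =>
      f2 (G (lam + (y:ℂ) * Complex.I)) (Complex.I • G₁ (lam + (y:ℂ) * Complex.I))
          (Complex.I • G₁ (lam + (y:ℂ) * Complex.I))
        + f1 (G (lam + (y:ℂ) * Complex.I))
            (Complex.I • (Complex.I • G₂ (lam + (y:ℂ) * Complex.I)))
        + (-(η*2)) with hgy''d
    have hgy : ∀ y, HasDerivAt (fun y : ℝ => w (lam + (y:ℂ) * Complex.I)) (gy' y) y := by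
      intro y
      rw [hwy]
      exact (he1 y).add (he2 y)
    have hgyp : ∀ y, HasDerivAt gy' (gy'' y) y := fun y => (he3 y).add (he4 y)
    -- the sum of the two second derivatives at 0 is positive
    have h00x : lam + ((0:ℝ):ℂ) = lam := by simp
    have h00y : lam + ((0:ℝ):ℂ) * Complex.I = lam := by simp
    have hII : ∀ z : Fin n → ℂ, Complex.I • (Complex.I • z) = -z := by
      intro z
      rw [smul_smul, Complex.I_mul_I, neg_one_smul]
    have hsum : gx'' 0 + gy'' 0 = (f2 (G lam) (G₁ lam) (G₁ lam)
        + f2 (G lam) (Complex.I • G₁ lam) (Complex.I • G₁ lam)) + 2*η := by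
      rw [hgx''d, hgy''d]
      simp only [h00x, h00y, hII, map_neg]
      ring
    have hQpos : 0 < gx'' 0 + gy'' 0 := by
      have := hQ (G lam) haaY (G₁ lam)
      rw [hsum]
      linarith
    by_cases hcase : 0 < gx'' 0
    · exact not_isLocalMax hgx hgxp hcase
        (haxis (fun x : ℝ => lam + (x:ℂ)) (by fun_prop) (by simp))
    · have hcy : 0 < gy'' 0 := by
        push_neg at hcase
        linarith
      exact not_isLocalMax hgy hgyp hcy
        (haxis (fun y : ℝ => lam + (y:ℂ) * Complex.I) (by fun_prop) (by simp))
  -- apply the rectangle maximum principle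
  obtain ⟨mu, hmuQ, hmubd, hmu⟩ := rect_max hwc zero_le_one hTpos hloc ((s₀:ℝ):ℂ)
    (by simpa using hs₀)
    (by
      simp only [Complex.ofReal_im]
      constructor <;> linarith)
  have hmu_le : w mu ≤ M₀ + 2*η := by
    have hballY : mu.re ∈ Set.Icc (0:ℝ) 1 → uε (G mu) ≤ B := by
      intro hmure
      apply hconv_le
      intro y hy
      apply hBY
      apply Metric.mem_cthickening_of_dist_le y (G mu) δ₁ Y' (hrange mu hmure)
      calc dist y (G mu) ≤ ε := Metric.mem_closedBall.mp hy
      _ ≤ δ₁ := by linarith [hεδ, hδδ₁, hδpos]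
    have hballK : (mu.re = 0 ∨ mu.re = 1) → uε (G mu) ≤ M₀ := by
      intro hmure
      apply hconv_le
      intro y hy
      have hyN : y ∈ Metric.cthickening δ₀ K := by
        apply Metric.mem_cthickening_of_dist_le y (G mu) δ₀ K (hbd mu hmure)
        calc dist y (G mu) ≤ ε := Metric.mem_closedBall.mp hy
        _ ≤ δ₀ := by linarith [hεδ, hδδ₀, hδpos]
      rw [huhu y (Or.inr hyN)]
      exact hM y hyN
    have hre2 : mu.re^2 ≤ 1 := by nlinarith [hmuQ.1.1, hmuQ.1.2]
    rcases hmubd with h0 | h1 | hm | hp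
    · have huε := hballK (Or.inl h0)
      have hwmu : w mu = uε (G mu) + η * (2*mu.re^2 - mu.im^2) := rfl
      rw [hwmu]
      nlinarith [sq_nonneg mu.im, hηpos]
    · have huε := hballK (Or.inr h1)
      have hwmu : w mu = uε (G mu) + η * (2*mu.re^2 - mu.im^2) := rfl
      rw [hwmu]
      nlinarith [sq_nonneg mu.im, hηpos]
    · have huε := hballY hmuQ.1
      have hwmu : w mu = uε (G mu) + η * (2*mu.re^2 - mu.im^2) := rfl
      have hmT : mu.im^2 = T^2 := by rw [hm]; ring
      rw [hwmu, hmT]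
      nlinarith [hηpos]
    · have huε := hballY hmuQ.1
      have hwmu : w mu = uε (G mu) + η * (2*mu.re^2 - mu.im^2) := rfl
      have hmT : mu.im^2 = T^2 := by rw [hp]
      rw [hwmu, hmT]
      nlinarith [hηpos]
  have hwp : uε p ≤ w ((s₀:ℝ):ℂ) := by
    rw [hwd]
    simp only [Complex.ofReal_re, Complex.ofReal_im, hpd]
    nlinarith [sq_nonneg s₀, hηpos]
  have h1 : uε p ≤ M₀ + 2*η := le_trans hwp (le_trans hmu hmu_le)
  have h2 : uh p - ε'/4 ≤ uε p := by
    apply hconv_ge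
    intro y hy
    have hd := hε₁ y (le_trans (Metric.mem_closedBall.mp hy) hεε₁)
    have hd2 := (abs_le.mp hd).1
    linarith
  have hup : u p = uh p := (huhu p hpN).symm
  calc u p = uh p := hup
  _ ≤ uε p + ε'/4 := by linarith
  _ ≤ M₀ + 2*η + ε'/4 := by linarith
  _ ≤ M₀ + ε' := by rw [hηd]; linarith


lemma expAbsOne (θ mi : ℝ) : ‖Complex.exp ((θ:ℂ) * Complex.I * (mi:ℂ))‖ = 1 := by
  rw [Complex.norm_exp]
  have h0 : ((θ:ℂ) * Complex.I * (mi:ℂ)).re = 0 := by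
    simp [Complex.mul_re, Complex.mul_im]
  rw [h0, Real.exp_zero]

lemma expDerivX (mi : ℝ) (l : ℂ) (x : ℝ) :
    HasDerivAt (fun s : ℝ => Complex.exp ((l + (s:ℂ)) * (mi:ℂ)))
      (Complex.exp ((l + (x:ℂ)) * (mi:ℂ)) * (mi:ℂ)) x := by
  have hbase : HasDerivAt (fun s : ℝ => ((s:ℝ):ℂ)) 1 x := by
    simpa using (hasDerivAt_id' x).ofReal_comp
  have hin : HasDerivAt (fun s : ℝ => (l + (s:ℂ)) * (mi:ℂ)) ((mi:ℂ)) x := by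
    have h1 := (hbase.const_add l).mul_const ((mi:ℂ))
    simpa using h1
  simpa using hin.cexp

lemma expDerivY (mi : ℝ) (l : ℂ) (y : ℝ) :
    HasDerivAt (fun s : ℝ => Complex.exp ((l + (s:ℂ) * Complex.I) * (mi:ℂ)))
      (Complex.exp ((l + (y:ℂ) * Complex.I) * (mi:ℂ)) * ((mi:ℂ) * Complex.I)) y := by
  have hbase : HasDerivAt (fun s : ℝ => ((s:ℂ) * Complex.I)) Complex.I y := by
    simpa using ((hasDerivAt_id' y).ofReal_comp).mul_const Complex.I
  have hin : HasDerivAt (fun s : ℝ => (l + (s:ℂ)*Complex.I) * (mi:ℂ))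
      ((mi:ℂ) * Complex.I) y := by
    have h1 := (hbase.const_add l).mul_const ((mi:ℂ))
    exact h1.congr_deriv (by ring)
  have h2 := hin.cexp
  exact h2

lemma form_zero_left (h : PosDefHermForm n) (w : Fin n → ℂ) : h.form 0 w = 0 := by
  have h0 : h.form 0 w = h.form 0 w + h.form 0 w := by
    have := h.add_left 0 0 w
    simpa using this
  have := left_eq_add.mp h0
  exact this

lemma form_sum_left (h : PosDefHermForm n) (f : Fin n → (Fin n → ℂ)) (w : Fin n → ℂ)
    (s : Finset (Fin n)) :
    h.form (∑ i ∈ s, f i) w = ∑ i ∈ s, h.form (f i) w := by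
  induction s using Finset.induction with
  | empty => simpa using form_zero_left h w
  | insert _ _ hx ih => rw [Finset.sum_insert hx, Finset.sum_insert hx, h.add_left, ih]

lemma form_add_right (h : PosDefHermForm n) (z w w' : Fin n → ℂ) :
    h.form z (w + w') = h.form z w + h.form z w' := by
  rw [h.conj_symm z (w + w'), h.add_left, map_add, ← h.conj_symm, ← h.conj_symm]

lemma form_smul_right (h : PosDefHermForm n) (a : ℂ) (z w : Fin n → ℂ) :
    h.form z (a • w) = starRingEnd ℂ a * h.form z w := by
  rw [h.conj_symm z (a • w), h.smul_left, map_mul, ← h.conj_symm]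

lemma form_sum_right (h : PosDefHermForm n) (f : Fin n → (Fin n → ℂ)) (z : Fin n → ℂ)
    (s : Finset (Fin n)) :
    h.form z (∑ i ∈ s, f i) = ∑ i ∈ s, h.form z (f i) := by
  induction s using Finset.induction with
  | empty =>
      have h0 : h.form z 0 = 0 := by
        rw [h.conj_symm, form_zero_left]
        simp
      simpa using h0
  | insert _ _ hx ih => rw [Finset.sum_insert hx, Finset.sum_insert hx, form_add_right, ih]

lemma form_apply_sum (h : PosDefHermForm n) (b : Module.Basis (Fin n) ℂ (Fin n → ℂ))
    (horth : ∀ i j, h.form (b i) (b j) = if i = j then 1 else 0) (ζ ξ : Fin n → ℂ) :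
    h.form (∑ i, ζ i • b i) (∑ j, ξ j • b j) = ∑ i, ζ i * starRingEnd ℂ (ξ i) := by
  rw [form_sum_left]
  apply Finset.sum_congr rfl
  intro i _
  rw [h.smul_left, form_sum_right]
  have hterm : ∀ j, h.form (b i) (ξ j • b j) = starRingEnd ℂ (ξ j) * (if i = j then 1 else 0) := by
    intro j
    rw [form_smul_right, horth]
  rw [Finset.sum_congr rfl (fun j _ => hterm j)]
  simp [mul_ite, mul_one, mul_zero, Finset.sum_ite_eq]

lemma form_self_re (h : PosDefHermForm n) (b : Module.Basis (Fin n) ℂ (Fin n → ℂ))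
    (horth : ∀ i j, h.form (b i) (b j) = if i = j then 1 else 0) (ζ : Fin n → ℂ) :
    (h.form (∑ i, ζ i • b i) (∑ i, ζ i • b i)).re = ∑ i, Complex.normSq (ζ i) := by
  rw [form_apply_sum h b horth]
  have hterm : ∀ i : Fin n, ζ i * starRingEnd ℂ (ζ i) = ((Complex.normSq (ζ i) : ℝ) : ℂ) :=
    fun i => Complex.mul_conj _
  rw [Finset.sum_congr rfl (fun i _ => hterm i)]
  rw [← Complex.ofReal_sum]
  exact Complex.ofReal_re _


end GeoAux
end GeoAux


/-- Theorem 1.3: geodesic convexity of the inscribed ellipsoids.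
If the endpoints `E₀` (unit ball of `h`) and `E₁ = A(E₀)` of the geodesic
`t ↦ A^t(E₀)` are contained in the pseudoconvex domain `Ω`, then so is every
`A^t(E₀)`, `t ∈ [0,1]`. -/
theorem geodesic_convexity {n : ℕ} (Ω : Set (Fin n → ℂ))
    (hΩ : IsPseudoconvex Ω) (hconn : IsConnected Ω)
    (h : PosDefHermForm n)
    (A : (Fin n → ℂ) →ₗ[ℂ] (Fin n → ℂ))
    (hsa : ∀ z w, h.form (A z) w = h.form z (A w))
    (hposA : ∀ z, z ≠ 0 → 0 < (h.form (A z) z).re)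
    (b : Module.Basis (Fin n) ℂ (Fin n → ℂ)) (c : Fin n → ℝ)
    (hc : ∀ i, 0 < c i)
    (horth : ∀ i j, h.form (b i) (b j) = if i = j then 1 else 0)
    (heig : ∀ i, A (b i) = (c i : ℂ) • b i)
    (Apow : ℝ → ((Fin n → ℂ) →ₗ[ℂ] (Fin n → ℂ)))
    (hApow : ∀ (t : ℝ) (i : Fin n), Apow t (b i) = ((c i ^ t : ℝ) : ℂ) • b i)
    (hE0 : h.ball ⊆ Ω) (hE1 : ⇑A '' h.ball ⊆ Ω) :
    ∀ t : ℝ, t ∈ Set.Icc (0:ℝ) 1 → ⇑(Apow t) '' h.ball ⊆ Ω := by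
  obtain ⟨hΩo, u, hu, hps, hexh⟩ := hΩ
  intro t ht x hxim
  obtain ⟨x0, hx0, rfl⟩ := hxim
  classical
  -- coordinates of x0
  set ζ : Fin n → ℂ := fun i => b.repr x0 i with hζd
  have hx0eq : ∑ i, ζ i • b i = x0 := by
    simpa [hζd] using b.sum_repr x0
  have hζlt : ∑ i, Complex.normSq (ζ i) < 1 := by
    have hfs := GeoAux.form_self_re h b horth ζ
    rw [hx0eq] at hfs
    rw [← hfs]
    exact hx0
  have hζ0 : 0 ≤ ∑ i, Complex.normSq (ζ i) :=
    Finset.sum_nonneg (fun i _ => Complex.normSq_nonneg _)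
  set ρsq := (1 + ∑ i, Complex.normSq (ζ i))/2 with hρd
  have hρlt : ρsq < 1 := by rw [hρd]; linarith
  have hρge : ∑ i, Complex.normSq (ζ i) ≤ ρsq := by rw [hρd]; linarith
  have hρ0 : 0 ≤ ρsq := by rw [hρd]; linarith
  -- the coefficient ball S
  set S : Set (Fin n → ℂ) := {z | ∑ i, Complex.normSq (z i) ≤ ρsq} with hSd
  have hsumcont : Continuous fun z : Fin n → ℂ => ∑ i, Complex.normSq (z i) := by
    apply continuous_finset_sum
    intro i _
    exact Complex.continuous_normSq.comp (continuous_apply i)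
  have hScl : IsClosed S := IsClosed.preimage hsumcont isClosed_Iic
  have hSsub : S ⊆ Metric.closedBall 0 1 := by
    intro z hz
    rw [Metric.mem_closedBall, dist_zero_right]
    rw [pi_norm_le_iff_of_nonneg zero_le_one]
    intro i
    have h2 : Complex.normSq (z i) ≤ ∑ j, Complex.normSq (z j) :=
      Finset.single_le_sum (fun j _ => Complex.normSq_nonneg _) (Finset.mem_univ i)
    have h1 : Complex.normSq (z i) ≤ ρsq := le_trans h2 hz
    have h3 := Complex.sq_norm (z i)
    nlinarith [norm_nonneg (z i), hρlt]
  have hSc : IsCompact S :=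
    Metric.isCompact_of_isClosed_isBounded hScl (Metric.isBounded_closedBall.subset hSsub)
  have hS0 : (0 : Fin n → ℂ) ∈ S := by
    simp [hSd, hρ0]
  have hSmul : ∀ (σ : ℝ), σ ∈ Set.Icc (0:ℝ) 1 → ∀ z ∈ S, σ • z ∈ S := by
    intro σ hσ z hz
    have hterm : ∀ i, Complex.normSq ((σ • z) i) = σ^2 * Complex.normSq (z i) := by
      intro i
      rw [Pi.smul_apply, Complex.real_smul, Complex.normSq_mul, Complex.normSq_ofReal]
      ring
    have : ∑ i, Complex.normSq ((σ • z) i) = σ^2 * ∑ i, Complex.normSq (z i) := by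
      rw [Finset.sum_congr rfl (fun i _ => hterm i), ← Finset.mul_sum]
    show ∑ i, Complex.normSq ((σ • z) i) ≤ ρsq
    rw [this]
    have hσ2 : σ^2 ≤ 1 := by nlinarith [hσ.1, hσ.2]
    have hz' : ∑ i, Complex.normSq (z i) ≤ ρsq := hz
    nlinarith [hζ0, hρ0, Finset.sum_nonneg (fun i (_ : i ∈ Finset.univ) => Complex.normSq_nonneg (z i))]
  -- the geodesic curves
  set m : Fin n → ℝ := fun i => Real.log (c i) with hmd
  set P : (Fin n → ℂ) → ℂ → (Fin n → ℂ) :=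
    fun z lam => ∑ i, (Complex.exp (lam * (m i : ℂ)) * z i) • b i with hPd
  set P1 : (Fin n → ℂ) → ℂ → (Fin n → ℂ) :=
    fun z lam => ∑ i, ((Complex.exp (lam * (m i : ℂ)) * (m i : ℂ)) * z i) • b i with hP1d
  set P2 : (Fin n → ℂ) → ℂ → (Fin n → ℂ) :=
    fun z lam => ∑ i, ((Complex.exp (lam * (m i : ℂ)) * (m i : ℂ) * (m i : ℂ)) * z i) • b i
    with hP2d
  have hPx : ∀ (z : Fin n → ℂ) (l : ℂ) (x : ℝ),
      HasDerivAt (fun s : ℝ => P z (l + (s:ℂ))) (P1 z (l + (x:ℂ))) x := by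
    intro z l x
    simp only [hPd, hP1d]
    apply HasDerivAt.fun_sum
    intro i _
    exact ((GeoAux.expDerivX (m i) l x).mul_const (z i)).smul_const (b i)
  have hP1x : ∀ (z : Fin n → ℂ) (l : ℂ) (x : ℝ),
      HasDerivAt (fun s : ℝ => P1 z (l + (s:ℂ))) (P2 z (l + (x:ℂ))) x := by
    intro z l x
    simp only [hP1d, hP2d]
    apply HasDerivAt.fun_sum
    intro i _
    exact (((GeoAux.expDerivX (m i) l x).mul_const ((m i : ℂ))).mul_const (z i)).smul_const (b i)
  have hPy : ∀ (z : Fin n → ℂ) (l : ℂ) (y : ℝ),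
      HasDerivAt (fun s : ℝ => P z (l + (s:ℂ)*Complex.I))
        (Complex.I • P1 z (l + (y:ℂ)*Complex.I)) y := by
    intro z l y
    simp only [hPd, hP1d]
    rw [Finset.smul_sum]
    apply HasDerivAt.fun_sum
    intro i _
    have h1 := ((GeoAux.expDerivY (m i) l y).mul_const (z i)).smul_const (b i)
    convert h1 using 1
    rw [smul_smul]
    congr 1
    ring
  have hP1y : ∀ (z : Fin n → ℂ) (l : ℂ) (y : ℝ),
      HasDerivAt (fun s : ℝ => P1 z (l + (s:ℂ)*Complex.I))
        (Complex.I • P2 z (l + (y:ℂ)*Complex.I)) y := by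
    intro z l y
    simp only [hP1d, hP2d]
    rw [Finset.smul_sum]
    apply HasDerivAt.fun_sum
    intro i _
    have h1 := (((GeoAux.expDerivY (m i) l y).mul_const ((m i : ℂ))).mul_const (z i)).smul_const
      (b i)
    convert h1 using 1
    rw [smul_smul]
    congr 1
    ring
  have hPcont2 : ∀ z : Fin n → ℂ, Continuous fun lam : ℂ => P z lam := by
    intro z
    simp only [hPd]
    apply continuous_finset_sum
    intro i _
    exact ((Complex.continuous_exp.comp (continuous_id.mul continuous_const)).mul
      continuous_const).smul continuous_const
  have hP1cont : ∀ z : Fin n → ℂ, Continuous fun lam : ℂ => P1 z lam := by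
    intro z
    simp only [hP1d]
    apply continuous_finset_sum
    intro i _
    exact (((Complex.continuous_exp.comp (continuous_id.mul continuous_const)).mul
      continuous_const).mul continuous_const).smul continuous_const
  have hPcontZ : Continuous fun q : (Fin n → ℂ) × ℝ => P q.1 ((q.2 : ℝ) : ℂ) := by
    simp only [hPd]
    apply continuous_finset_sum
    intro i _
    apply Continuous.fun_smul _ continuous_const
    exact (Complex.continuous_exp.comp
      (((Complex.continuous_ofReal.comp continuous_snd)).mul continuous_const)).mul
      ((continuous_apply i).comp continuous_fst)
  -- scaling and rotation identities
  have hPsmul : ∀ (σ : ℝ) (z : Fin n → ℂ) (lam : ℂ), P (σ • z) lam = σ • P z lam := by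
    intro σ z lam
    simp only [hPd]
    rw [Finset.smul_sum]
    apply Finset.sum_congr rfl
    intro i _
    rw [Pi.smul_apply, Complex.real_smul]
    rw [← algebraMap_smul ℂ σ ((Complex.exp (lam * (m i:ℂ)) * z i) • b i),
      Complex.coe_algebraMap, smul_smul]
    congr 1
    ring
  have hrot : ∀ (z : Fin n → ℂ) (lam : ℂ),
      P z lam = P (fun i => Complex.exp ((lam.im:ℂ) * Complex.I * (m i : ℂ)) * z i)
        ((lam.re:ℝ):ℂ) := by
    intro z lam
    simp only [hPd]
    apply Finset.sum_congr rfl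
    intro i _
    congr 1
    have hsplit : lam * (m i : ℂ) = (lam.re:ℂ)*(m i:ℂ) + (lam.im:ℂ)*Complex.I*(m i:ℂ) := by
      conv_lhs => rw [← Complex.re_add_im lam]
      ring
    rw [hsplit, Complex.exp_add]
    ring
  have hrotS : ∀ z ∈ S, ∀ θ : ℝ,
      (fun i => Complex.exp ((θ:ℂ) * Complex.I * (m i:ℂ)) * z i) ∈ S := by
    intro z hz θ
    have hterm : ∀ i, Complex.normSq (Complex.exp ((θ:ℂ)*Complex.I*(m i:ℂ)) * z i)
        = Complex.normSq (z i) := by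
      intro i
      rw [Complex.normSq_mul]
      have h1 : Complex.normSq (Complex.exp ((θ:ℂ)*Complex.I*(m i:ℂ))) = 1 := by
        rw [Complex.normSq_eq_norm_sq, GeoAux.expAbsOne]
        norm_num
      rw [h1, one_mul]
    show ∑ i, Complex.normSq _ ≤ ρsq
    rw [Finset.sum_congr rfl (fun i _ => hterm i)]
    exact hz
  -- endpoint identifications
  have hP0 : ∀ z : Fin n → ℂ, P z 0 = ∑ i, z i • b i := by
    intro z
    simp [hPd]
  have hPone : ∀ z : Fin n → ℂ, P z 1 = ∑ i, ((c i : ℂ) * z i) • b i := by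
    intro z
    simp only [hPd]
    apply Finset.sum_congr rfl
    intro i _
    congr 2
    rw [one_mul, hmd]
    rw [← Complex.ofReal_exp, Real.exp_log (hc i)]
  -- the endpoint compacts
  set K0 := (fun z : Fin n → ℂ => P z 0) '' S with hK0d
  set K1 := (fun z : Fin n → ℂ => P z 1) '' S with hK1d
  have hK0c : IsCompact K0 := hSc.image (by
    simp only [hPd]
    apply continuous_finset_sum
    intro i _
    exact (continuous_const.mul (continuous_apply i)).smul continuous_const)
  have hK1c : IsCompact K1 := hSc.image (by
    simp only [hPd]
    apply continuous_finset_sum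
    intro i _
    exact (continuous_const.mul (continuous_apply i)).smul continuous_const)
  have hmemball : ∀ z ∈ S, (∑ i, z i • b i) ∈ h.ball := by
    intro z hz
    show (h.form _ _).re < 1
    rw [GeoAux.form_self_re h b horth z]
    exact lt_of_le_of_lt hz hρlt
  have hK0Ω : K0 ⊆ Ω := by
    rintro _ ⟨z, hz, rfl⟩
    apply hE0
    show P z 0 ∈ h.ball
    rw [hP0 z]
    exact hmemball z hz
  have hK1Ω : K1 ⊆ Ω := by
    rintro _ ⟨z, hz, rfl⟩
    apply hE1
    refine ⟨∑ i, z i • b i, hmemball z hz, ?_⟩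
    show A (∑ i, z i • b i) = P z 1
    rw [map_sum, hPone z]
    apply Finset.sum_congr rfl
    intro i _
    rw [LinearMap.map_smul, heig i, smul_smul, mul_comm (z i) ((c i : ℂ))]
  set K := K0 ∪ K1 with hKd
  have hKc : IsCompact K := hK0c.union hK1c
  have hKΩ : K ⊆ Ω := Set.union_subset hK0Ω hK1Ω
  obtain ⟨δ₀, hδ₀pos, hδ₀⟩ := hKc.exists_cthickening_subset_open hΩo hKΩ
  obtain ⟨M₀, hM₀⟩ := (hKc.cthickening (r := δ₀)).exists_bound_of_continuousOn (hu.mono hδ₀)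
  have hM₀' : ∀ y ∈ Metric.cthickening δ₀ K, u y ≤ M₀ := by
    intro y hy
    calc u y ≤ |u y| := le_abs_self _
    _ = ‖u y‖ := (Real.norm_eq_abs _).symm
    _ ≤ M₀ := hM₀ y hy
  set C := {z : Fin n → ℂ | z ∈ Ω ∧ u z ≤ M₀} with hCd
  have hCc : IsCompact C := hexh M₀
  have hCcl : IsClosed C := hCc.isClosed
  have hCΩ : C ⊆ Ω := fun z hz => hz.1
  -- the key Phragmén–Lindelöf step
  have KEY : ∀ σ : ℝ, σ ∈ Set.Icc (0:ℝ) 1 →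
      (∀ z ∈ S, ∀ s ∈ Set.Icc (0:ℝ) 1, P (σ • z) ((s:ℝ):ℂ) ∈ Ω) →
      (∀ z ∈ S, ∀ s ∈ Set.Icc (0:ℝ) 1, P (σ • z) ((s:ℝ):ℂ) ∈ C) := by
    intro σ hσ hgood z hz s hs
    set Y' := (fun q : (Fin n → ℂ) × ℝ => P (σ • q.1) ((q.2:ℝ):ℂ)) '' (S ×ˢ Set.Icc (0:ℝ) 1)
      with hY'd
    have hY'c : IsCompact Y' := by
      apply (hSc.prod isCompact_Icc).image
      exact hPcontZ.comp (((continuous_fst.const_smul σ)).prodMk continuous_snd)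
    have hY'Ω : Y' ⊆ Ω := by
      rintro _ ⟨q, hq, rfl⟩
      exact hgood q.1 hq.1 q.2 hq.2
    have hrangeG : ∀ lam : ℂ, lam.re ∈ Set.Icc (0:ℝ) 1 → P (σ • z) lam ∈ Y' := by
      intro lam hlam
      rw [hrot (σ • z) lam]
      have hzrot' : (fun i => Complex.exp ((lam.im:ℂ)*Complex.I*(m i:ℂ)) * (σ • z) i)
          = σ • (fun i => Complex.exp ((lam.im:ℂ)*Complex.I*(m i:ℂ)) * z i) := by
        funext i
        simp only [Pi.smul_apply, Complex.real_smul]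
        ring
      rw [hzrot']
      exact ⟨(_, lam.re), ⟨hrotS z hz lam.im, hlam⟩, rfl⟩
    have hbdG : ∀ lam : ℂ, (lam.re = 0 ∨ lam.re = 1) → P (σ • z) lam ∈ K := by
      intro lam hlam
      rw [hrot (σ • z) lam]
      have hzrot' : (fun i => Complex.exp ((lam.im:ℂ)*Complex.I*(m i:ℂ)) * (σ • z) i)
          = σ • (fun i => Complex.exp ((lam.im:ℂ)*Complex.I*(m i:ℂ)) * z i) := by
        funext i
        simp only [Pi.smul_apply, Complex.real_smul]
        ring
      rw [hzrot']
      have hz'S : σ • (fun i => Complex.exp ((lam.im:ℂ)*Complex.I*(m i:ℂ)) * z i) ∈ S :=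
        hSmul σ hσ _ (hrotS z hz lam.im)
      rcases hlam with h0 | h1
      · left
        rw [h0]
        exact ⟨_, hz'S, by norm_num⟩
      · right
        rw [h1]
        exact ⟨_, hz'S, by norm_num⟩
    refine ⟨hgood z hz s hs, ?_⟩
    exact GeoAux.strip_bound hΩo hu hps (fun lam => P (σ • z) lam)
      (fun lam => P1 (σ • z) lam) (fun lam => P2 (σ • z) lam) (hPcont2 _) (hP1cont _)
      (hPx (σ • z)) (hPy (σ • z)) (hP1x (σ • z)) (hP1y (σ • z)) hY'c hY'Ω hrangeG hKc hbdG
      hδ₀pos hδ₀ hM₀' s hs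
  -- the continuity method in the scaling parameter
  set good : ℝ → Prop :=
    fun σ => ∀ z ∈ S, ∀ s ∈ Set.Icc (0:ℝ) 1, P (σ • z) ((s:ℝ):ℂ) ∈ Ω with hgoodd
  set Agood := {σ : ℝ | σ ∈ Set.Icc (0:ℝ) 1 ∧ good σ} with hAd
  have h0ball : (0 : Fin n → ℂ) ∈ h.ball := by
    show (h.form 0 0).re < 1
    rw [GeoAux.form_zero_left h 0]
    norm_num
  have h0A : (0:ℝ) ∈ Agood := by
    refine ⟨⟨le_refl 0, zero_le_one⟩, ?_⟩
    intro z hz s hs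
    have : P ((0:ℝ) • z) ((s:ℝ):ℂ) = 0 := by
      rw [hPsmul]
      simp
    rw [this]
    exact hE0 h0ball
  have hbdd : BddAbove Agood := ⟨1, fun σ hσ => hσ.1.2⟩
  have hAne : Agood.Nonempty := ⟨0, h0A⟩
  set τ := sSup Agood with hτd
  have hτmem : τ ∈ Set.Icc (0:ℝ) 1 :=
    ⟨le_csSup hbdd h0A, csSup_le hAne (fun σ hσ => hσ.1.2)⟩
  have hgoodCτ : ∀ z ∈ S, ∀ s ∈ Set.Icc (0:ℝ) 1, P (τ • z) ((s:ℝ):ℂ) ∈ C := by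
    intro z hz s hs
    have hclosed : IsClosed {σ : ℝ | P (σ • z) ((s:ℝ):ℂ) ∈ C} := by
      have heq : (fun σ : ℝ => P (σ • z) ((s:ℝ):ℂ)) = fun σ : ℝ => σ • P z ((s:ℝ):ℂ) :=
        funext (fun σ => hPsmul σ z _)
      apply IsClosed.preimage _ hCcl
      rw [heq]
      exact continuous_id.smul continuous_const
    have hsub2 : Agood ⊆ {σ | P (σ • z) ((s:ℝ):ℂ) ∈ C} :=
      fun σ hσ => KEY σ hσ.1 hσ.2 z hz s hs
    have hτcl : τ ∈ closure Agood := csSup_mem_closure hAne hbdd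
    exact (hclosed.closure_subset_iff.mpr hsub2) hτcl
  have hτgood : good τ := fun z hz s hs => hCΩ (hgoodCτ z hz s hs)
  have hτ1 : τ = 1 := by
    by_contra hne
    have hτlt : τ < 1 := lt_of_le_of_ne hτmem.2 hne
    set Yτ := (fun q : (Fin n → ℂ) × ℝ => P (τ • q.1) ((q.2:ℝ):ℂ)) '' (S ×ˢ Set.Icc (0:ℝ) 1)
      with hYτd
    have hYτc : IsCompact Yτ := by
      apply (hSc.prod isCompact_Icc).image
      exact hPcontZ.comp (((continuous_fst.const_smul τ)).prodMk continuous_snd)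
    have hYτΩ : Yτ ⊆ Ω := by
      rintro _ ⟨q, hq, rfl⟩
      exact hτgood q.1 hq.1 q.2 hq.2
    obtain ⟨δ₂, hδ₂pos, hδ₂⟩ := hYτc.exists_cthickening_subset_open hΩo hYτΩ
    set Y1 := (fun q : (Fin n → ℂ) × ℝ => P q.1 ((q.2:ℝ):ℂ)) '' (S ×ˢ Set.Icc (0:ℝ) 1)
      with hY1d
    have hY1c : IsCompact Y1 := by
      apply (hSc.prod isCompact_Icc).image
      exact hPcontZ
    obtain ⟨R, hR⟩ := hY1c.exists_bound_of_continuousOn continuousOn_id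
    have hR0 : 0 ≤ R := by
      have hmem : P (0 : Fin n → ℂ) ((0:ℝ):ℂ) ∈ Y1 :=
        ⟨(0, 0), ⟨hS0, le_refl 0, zero_le_one⟩, rfl⟩
      exact le_trans (norm_nonneg _) (hR _ hmem)
    set σ' := min 1 (τ + δ₂/(R+1)) with hσ'd
    have hRpos : (0:ℝ) < R + 1 := by linarith
    have hσ'gt : τ < σ' := lt_min hτlt (by linarith [div_pos hδ₂pos hRpos])
    have hσ'le1 : σ' ≤ 1 := min_le_left _ _
    have hσ'0 : 0 ≤ σ' := le_trans hτmem.1 hσ'gt.le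
    have hσ'good : good σ' := by
      intro z hz s hs
      apply hδ₂
      apply Metric.mem_cthickening_of_dist_le _ (P (τ • z) ((s:ℝ):ℂ)) δ₂ Yτ
        ⟨(z, s), ⟨hz, hs⟩, rfl⟩
      have hdiff : P (σ' • z) ((s:ℝ):ℂ) - P (τ • z) ((s:ℝ):ℂ) = (σ' - τ) • P z ((s:ℝ):ℂ) := by
        rw [hPsmul, hPsmul, ← sub_smul]
      rw [dist_eq_norm, hdiff, norm_smul]
      have hPz : ‖P z ((s:ℝ):ℂ)‖ ≤ R := hR _ ⟨(z, s), ⟨hz, hs⟩, rfl⟩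
      have hστ : |σ' - τ| ≤ δ₂/(R+1) := by
        rw [_root_.abs_of_nonneg (by linarith)]
        have hh : σ' ≤ τ + δ₂/(R+1) := min_le_right _ _
        linarith
      calc ‖σ' - τ‖ * ‖P z ((s:ℝ):ℂ)‖ ≤ (δ₂/(R+1)) * R := by
            apply mul_le_mul _ hPz (norm_nonneg _) (by positivity)
            rw [Real.norm_eq_abs]
            exact hστ
      _ ≤ (δ₂/(R+1)) * (R+1) := by
            apply mul_le_mul_of_nonneg_left (by linarith) (by positivity)
      _ = δ₂ := by field_simp
    have hσ'A : σ' ∈ Agood := ⟨⟨hσ'0, hσ'le1⟩, hσ'good⟩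
    have := le_csSup hbdd hσ'A
    linarith
  -- conclusion
  have hζS : ζ ∈ S := hρge
  have h1good : good 1 := by
    rw [← hτ1]
    exact hτgood
  have hmem := h1good ζ hζS t ht
  rw [one_smul] at hmem
  have hident : P ζ ((t:ℝ):ℂ) = Apow t x0 := by
    conv_rhs => rw [← hx0eq]
    rw [map_sum]
    simp only [hPd]
    apply Finset.sum_congr rfl
    intro i _
    rw [LinearMap.map_smul, hApow, smul_smul]
    congr 1
    have hexp : Complex.exp ((t:ℂ) * (m i : ℂ)) = ((c i ^ t : ℝ) : ℂ) := by
      rw [hmd]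
      rw [← Complex.ofReal_mul, ← Complex.ofReal_exp]
      congr 1
      rw [Real.rpow_def_of_pos (hc i), mul_comm]
    rw [hexp]
    ring
  rw [← hident]
  exact hmem
end

section
/- Let Ω ⊂ ℂⁿ be a bounded open set and E_h ⊂ Ω a hermitian ellipsoid of maximal volume among hermitian ellipsoids centered at 0 contained in Ω. Then for every linear operator T on ℂⁿ, Re(tr T)/n ≤ max{Re h(Tz,z) : z ∈ ∂Ω ∩ ∂E_h}. -/
open Complex MeasureTheory Bornology

set_option synthInstance.maxHeartbeats 1000000
set_option maxHeartbeats 2000000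
set_option linter.unusedVariables false
open Pointwise

namespace PosDefHermForm
variable {n : ℕ} (h : PosDefHermForm n)

lemma smul_right (a : ℂ) (z w : Fin n → ℂ) : h.form z (a • w) = (starRingEnd ℂ) a * h.form z w := by
  rw [h.conj_symm, h.smul_left, map_mul, ← h.conj_symm]

lemma add_right (z w w' : Fin n → ℂ) : h.form z (w + w') = h.form z w + h.form z w' := by
  rw [h.conj_symm, h.add_left, map_add, ← h.conj_symm, ← h.conj_symm]

lemma zero_left (w : Fin n → ℂ) : h.form 0 w = 0 := by
  have := h.smul_left 0 0 w
  simpa using this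

lemma zero_right (z : Fin n → ℂ) : h.form z 0 = 0 := by
  rw [h.conj_symm, h.zero_left]; simp

/-- `h.form` as a ℂ-linear map in the first variable. -/
noncomputable def leftMap (w : Fin n → ℂ) : (Fin n → ℂ) →ₗ[ℂ] ℂ where
  toFun z := h.form z w
  map_add' z z' := h.add_left z z' w
  map_smul' a z := h.smul_left a z w

lemma form_left_sum (z w : Fin n → ℂ) :
    h.form z w = ∑ i, z i * h.form (fun k => if i = k then 1 else 0) w := by
  have h0 : h.form z w = h.leftMap w z := rfl
  rw [h0]
  conv_lhs => rw [pi_eq_sum_univ z]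
  rw [map_sum]
  simp only [_root_.map_smul, smul_eq_mul]
  rfl

lemma form_eq_sum (z w : Fin n → ℂ) :
    h.form z w = ∑ i, ∑ j, z i * (starRingEnd ℂ) (w j) *
      (starRingEnd ℂ) (h.form (fun k => if j = k then 1 else 0) (fun k => if i = k then 1 else 0)) := by
  rw [h.form_left_sum z w]
  refine Finset.sum_congr rfl fun i _ => ?_
  rw [h.conj_symm _ w, h.form_left_sum w, map_sum, Finset.mul_sum]
  refine Finset.sum_congr rfl fun j _ => ?_
  rw [map_mul]
  ring

lemma continuous_form : Continuous (fun p : (Fin n → ℂ) × (Fin n → ℂ) => h.form p.1 p.2) := by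
  have : (fun p : (Fin n → ℂ) × (Fin n → ℂ) => h.form p.1 p.2)
      = fun p => ∑ i, ∑ j, p.1 i * (starRingEnd ℂ) (p.2 j) *
        (starRingEnd ℂ) (h.form (fun k => if j = k then 1 else 0) (fun k => if i = k then 1 else 0)) := by
    funext p; exact h.form_eq_sum p.1 p.2
  rw [this]
  apply continuous_finset_sum; intro i _
  apply continuous_finset_sum; intro j _
  exact (((continuous_apply i).comp continuous_fst).mul
    (Complex.continuous_conj.comp ((continuous_apply j).comp continuous_snd))).mul continuous_const

lemma continuous_re_form {α : Type*} [TopologicalSpace α] {f g : α → (Fin n → ℂ)}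
    (hf : Continuous f) (hg : Continuous g) :
    Continuous fun x => (h.form (f x) (g x)).re :=
  Complex.continuous_re.comp (h.continuous_form.comp (hf.prodMk hg))

lemma re_smul_smul (r : ℝ) (z w : Fin n → ℂ) :
    (h.form (r • z) (r • w)).re = r ^ 2 * (h.form z w).re := by
  have hz : r • z = (r : ℂ) • z := by
    rw [← Complex.coe_algebraMap, algebraMap_smul]
  have hw : r • w = (r : ℂ) • w := by
    rw [← Complex.coe_algebraMap, algebraMap_smul]
  rw [hz, hw, h.smul_left, h.smul_right]
  rw [Complex.conj_ofReal, ← mul_assoc, ← Complex.ofReal_mul, Complex.re_ofReal_mul]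
  ring

lemma re_nonneg (z : Fin n → ℂ) : 0 ≤ (h.form z z).re := by
  rcases eq_or_ne z 0 with rfl | hz
  · rw [h.zero_left]; simp
  · exact (h.posdef z hz).le

lemma isOpen_ball : IsOpen h.ball :=
  isOpen_lt (h.continuous_re_form continuous_id continuous_id) continuous_const

lemma zero_mem_ball : 0 ∈ h.ball := by
  simp [PosDefHermForm.ball, h.zero_left]

lemma closure_ball : closure h.ball = {z | (h.form z z).re ≤ 1} := by
  apply Set.Subset.antisymm
  · refine closure_minimal (fun z hz => ?_) ?_
    · show (h.form z z).re ≤ 1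
      exact le_of_lt hz
    exact isClosed_le (h.continuous_re_form continuous_id continuous_id) continuous_const
  · intro z hz
    have htt : Filter.Tendsto (fun r : ℝ => r • z) (nhdsWithin 1 (Set.Iio 1)) (nhds z) := by
      have : Filter.Tendsto (fun r : ℝ => r • z) (nhds 1) (nhds ((1:ℝ) • z)) :=
        (continuous_id.smul continuous_const).tendsto 1
      rw [one_smul] at this
      exact this.mono_left nhdsWithin_le_nhds
    refine mem_closure_of_tendsto htt ?_
    have hmem : Set.Ioo (0:ℝ) 1 ∈ nhdsWithin (1:ℝ) (Set.Iio 1) :=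
      Ioo_mem_nhdsLT_of_mem (by constructor <;> norm_num)
    filter_upwards [hmem] with r hr
    show (h.form (r • z) (r • z)).re < 1
    rw [h.re_smul_smul]
    calc r ^ 2 * (h.form z z).re ≤ r ^ 2 * 1 := by
          apply mul_le_mul_of_nonneg_left hz (sq_nonneg r)
      _ < 1 := by rw [mul_one]; nlinarith [hr.1, hr.2]

lemma frontier_ball : frontier h.ball = {z | (h.form z z).re = 1} := by
  rw [frontier, h.isOpen_ball.interior_eq, h.closure_ball]
  ext z
  simp only [Set.mem_diff, Set.mem_setOf_eq, PosDefHermForm.ball, not_lt]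
  constructor
  · exact fun ⟨a, b⟩ => le_antisymm a b
  · exact fun e => ⟨le_of_eq e, ge_of_eq e⟩

lemma smul_ball (c : ℝ) (hc : 0 < c) :
    c • h.ball = {z | (h.form z z).re < c ^ 2} := by
  ext z
  rw [Set.mem_smul_set_iff_inv_smul_mem₀ (ne_of_gt hc)]
  show (h.form (c⁻¹ • z) (c⁻¹ • z)).re < 1 ↔ _
  rw [h.re_smul_smul]
  rw [Set.mem_setOf_eq, inv_pow, inv_mul_lt_iff₀ (by positivity), mul_one]

end PosDefHermForm

noncomputable def realBasis (n : ℕ) : Module.Basis (Fin 2 × Fin n) ℝ (Fin n → ℂ) :=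
  Complex.basisOneI.smulTower (Pi.basisFun ℂ (Fin n))

noncomputable def Nmat {n : ℕ} (T : (Fin n → ℂ) →ₗ[ℂ] (Fin n → ℂ)) :
    Matrix (Fin 2 × Fin n) (Fin 2 × Fin n) ℝ :=
  LinearMap.toMatrix (realBasis n) (realBasis n) (T.restrictScalars ℝ)

lemma trace_Nmat {n : ℕ} (T : (Fin n → ℂ) →ₗ[ℂ] (Fin n → ℂ)) :
    Matrix.trace (Nmat T) = 2 * (LinearMap.trace ℂ (Fin n → ℂ) T).re := by
  have hc : LinearMap.trace ℂ (Fin n → ℂ) T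
      = Matrix.trace (LinearMap.toMatrix (Pi.basisFun ℂ (Fin n)) (Pi.basisFun ℂ (Fin n)) T) :=
    LinearMap.trace_eq_matrix_trace ℂ (Pi.basisFun ℂ (Fin n)) T
  rw [hc]
  rw [Matrix.trace, Matrix.trace]
  rw [Complex.re_sum]
  rw [Fintype.sum_prod_type]
  rw [Fin.sum_univ_two]
  rw [← Finset.sum_add_distrib, Finset.mul_sum]
  refine Finset.sum_congr rfl fun j _ => ?_
  simp only [Matrix.diag_apply, Nmat, LinearMap.toMatrix_apply, realBasis,
    Module.Basis.smulTower_repr, Module.Basis.smulTower_apply, Pi.basisFun_repr, Pi.basisFun_apply,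
    LinearMap.restrictScalars_apply]
  rw [LinearMap.map_smul, LinearMap.map_smul]
  simp only [Pi.smul_apply, smul_eq_mul, Complex.coe_basisOneI_repr, Complex.coe_basisOneI]
  simp only [Matrix.cons_val_zero, Matrix.cons_val_one, Matrix.head_cons]
  simp only [one_mul, Complex.mul_im, Complex.I_re, Complex.I_im]
  ring

lemma det_restrict_eq {n : ℕ} (T : (Fin n → ℂ) →ₗ[ℂ] (Fin n → ℂ)) (t : ℝ) :
    LinearMap.det ((LinearMap.id - (t : ℂ) • T).restrictScalars ℝ)
      = Matrix.det (1 - t • Nmat T) := by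
  rw [← LinearMap.det_toMatrix (realBasis n)]
  congr 1
  have he : (LinearMap.id - (t : ℂ) • T).restrictScalars ℝ
      = (LinearMap.id : (Fin n → ℂ) →ₗ[ℝ] (Fin n → ℂ)) - t • (T.restrictScalars ℝ) := by
    apply LinearMap.ext; intro z
    simp only [LinearMap.restrictScalars_apply, LinearMap.sub_apply, LinearMap.id_apply,
      LinearMap.smul_apply]
    rw [← Complex.coe_algebraMap, algebraMap_smul]
  rw [he, map_sub, _root_.map_smul, LinearMap.toMatrix_id]
  rfl

lemma hasDerivAt_det {n : ℕ} (T : (Fin n → ℂ) →ₗ[ℂ] (Fin n → ℂ)) :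
    HasDerivAt (fun t : ℝ => Matrix.det (1 - t • Nmat T))
      (- (2 * (LinearMap.trace ℂ (Fin n → ℂ) T).re)) 0 := by
  classical
  set N := Nmat T
  set P : Polynomial ℝ :=
    (Matrix.det (1 + (Polynomial.X : Polynomial ℝ) • (-N).map Polynomial.C)).divX.divX with hP
  set Q : Polynomial ℝ :=
    Polynomial.C 1 + Polynomial.C (Matrix.trace (-N)) * Polynomial.X + P * Polynomial.X ^ 2 with hQ
  have hfun : (fun t : ℝ => Matrix.det (1 - t • N)) = fun t => Q.eval t := by
    funext t
    have : (1 : Matrix (Fin 2 × Fin n) (Fin 2 × Fin n) ℝ) - t • N = 1 + t • (-N) := by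
      rw [smul_neg, sub_eq_add_neg]
    rw [this, Matrix.det_one_add_smul]
    simp [hQ, hP]
  rw [hfun]
  have hd := Q.hasDerivAt (0 : ℝ)
  have : Q.derivative.eval 0 = Matrix.trace (-N) := by
    simp [hQ, Polynomial.derivative_mul]
  rw [this] at hd
  have : Matrix.trace (-N) = - (2 * (LinearMap.trace ℂ (Fin n → ℂ) T).re) := by
    rw [Matrix.trace_neg, trace_Nmat]
  rwa [this] at hd

lemma eventually_lt_of_hasDerivAt_neg {f : ℝ → ℝ} {f' : ℝ} (hf : HasDerivAt f f' 0)
    (hneg : f' < 0) : ∀ᶠ t in nhdsWithin 0 (Set.Ioi (0:ℝ)), f t < f 0 := by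
  have hs := hasDerivAt_iff_tendsto_slope.1 hf
  have h1 : ∀ᶠ t in nhdsWithin 0 {(0:ℝ)}ᶜ, slope f 0 t < 0 := hs.eventually_lt_const hneg
  have h2 : ∀ᶠ t in nhdsWithin 0 (Set.Ioi (0:ℝ)), slope f 0 t < 0 :=
    h1.filter_mono (nhdsWithin_mono 0 (fun x hx => ne_of_gt hx))
  filter_upwards [h2, self_mem_nhdsWithin] with t ht ht0
  have ht0' : (0:ℝ) < t := ht0
  rw [slope_def_field, sub_zero] at ht
  rcases div_neg_iff.1 ht with ⟨h3, h4⟩ | ⟨h3, h4⟩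
  · linarith
  · linarith

lemma eventually_gt_of_hasDerivAt_pos {f : ℝ → ℝ} {f' : ℝ} (hf : HasDerivAt f f' 0)
    (hpos : 0 < f') : ∀ᶠ t in nhdsWithin 0 (Set.Ioi (0:ℝ)), f 0 < f t := by
  have := eventually_lt_of_hasDerivAt_neg (f := fun t => - f t) (f' := -f') hf.neg (by linarith)
  filter_upwards [this] with t ht
  simpa using ht

lemma master {n : ℕ} (hn : 0 < n) {Ω : Set (Fin n → ℂ)} (hΩb : IsBounded Ω)
    (h : PosDefHermForm n) (hsub : h.ball ⊆ Ω)
    (hmax : ∀ k : PosDefHermForm n, k.ball ⊆ Ω → volume k.ball ≤ volume h.ball)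
    (σ : ℝ) (hσ : 0 < σ) (A : (Fin n → ℂ) →ₗ[ℂ] (Fin n → ℂ))
    (hA : Function.Injective ⇑A)
    (hDpos : 0 < LinearMap.det (A.restrictScalars ℝ))
    (hball : {z | σ * (h.form (A z) (A z)).re < 1} ⊆ Ω)
    (hdet : σ ^ n * LinearMap.det (A.restrictScalars ℝ) < 1) : False := by
  classical
  -- the new hermitian form
  set k : PosDefHermForm n :=
    { form := fun z w => (σ : ℂ) * h.form (A z) (A w)
      add_left := by
        intro z z' w
        show (σ : ℂ) * h.form (A (z + z')) (A w) = _
        rw [map_add, h.add_left]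
        ring
      smul_left := by
        intro a z w
        show (σ : ℂ) * h.form (A (a • z)) (A w) = _
        rw [_root_.map_smul, h.smul_left]
        ring
      conj_symm := by
        intro z w
        show (σ : ℂ) * h.form (A z) (A w) = (starRingEnd ℂ) ((σ : ℂ) * h.form (A w) (A z))
        rw [map_mul, Complex.conj_ofReal, ← h.conj_symm]
      posdef := by
        intro z hz
        have hAz : A z ≠ 0 := fun e => hz (hA (by simpa using e))
        rw [Complex.re_ofReal_mul]
        exact mul_pos hσ (h.posdef _ hAz) } with hk
  have hkball : k.ball = {z | σ * (h.form (A z) (A z)).re < 1} := by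
    ext z
    simp only [PosDefHermForm.ball, hk, Set.mem_setOf_eq, Complex.re_ofReal_mul]
  -- volume facts
  have hball_pos : 0 < volume h.ball :=
    h.isOpen_ball.measure_pos volume ⟨0, h.zero_mem_ball⟩
  have hball_bdd : IsBounded h.ball := hΩb.subset hsub
  have hball_fin : volume h.ball < ⊤ := by
    obtain ⟨R, hR⟩ := hball_bdd.subset_closedBall 0
    exact lt_of_le_of_lt (measure_mono hR) (MeasureTheory.measure_closedBall_lt_top)
  -- k.ball as preimage of a scaled ball
  set c : ℝ := (Real.sqrt σ)⁻¹ with hc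
  have hsq : 0 < Real.sqrt σ := Real.sqrt_pos.2 hσ
  have hcpos : 0 < c := inv_pos.2 hsq
  have hc2 : c ^ 2 = σ⁻¹ := by
    rw [hc, inv_pow, Real.sq_sqrt hσ.le]
  have hpre : k.ball = ⇑A ⁻¹' (c • h.ball) := by
    rw [h.smul_ball c hcpos, hkball]
    ext z
    simp only [Set.mem_setOf_eq, Set.mem_preimage, hc2]
    rw [← one_div, lt_div_iff₀ hσ, mul_comm]
  -- compute the volume of k.ball
  have hdet_ne : LinearMap.det (A.restrictScalars ℝ) ≠ 0 := ne_of_gt hDpos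
  have hfr : Module.finrank ℝ (Fin n → ℂ) = 2 * n := by
    rw [Module.finrank_pi_fintype ℝ]
    simp [Complex.finrank_real_complex, mul_comm]
  have hvol : volume k.ball
      = ENNReal.ofReal ((LinearMap.det (A.restrictScalars ℝ))⁻¹ * c ^ (2 * n))
        * volume h.ball := by
    rw [hpre]
    have h1 : volume (⇑(A.restrictScalars ℝ) ⁻¹' (c • h.ball))
        = ENNReal.ofReal |(LinearMap.det (A.restrictScalars ℝ))⁻¹| * volume (c • h.ball) :=
      MeasureTheory.Measure.addHaar_preimage_linearMap volume hdet_ne _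
    have h2 : volume (c • h.ball)
        = ENNReal.ofReal (c ^ Module.finrank ℝ (Fin n → ℂ)) * volume h.ball :=
      MeasureTheory.Measure.addHaar_smul_of_nonneg volume hcpos.le _
    have h3 : ⇑(A.restrictScalars ℝ) = ⇑A := rfl
    rw [← h3, h1, h2, hfr, ← mul_assoc, ← ENNReal.ofReal_mul (by positivity)]
    rw [abs_of_pos (inv_pos.2 hDpos)]
  -- the contradiction
  have hle : volume k.ball ≤ volume h.ball := hmax k (by rw [hkball]; exact hball)
  have hgt : (1 : ℝ) < (LinearMap.det (A.restrictScalars ℝ))⁻¹ * c ^ (2 * n) := by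
    have hc2n : c ^ (2 * n) = (σ ^ n)⁻¹ := by
      rw [pow_mul, hc2, inv_pow]
    rw [hc2n, ← mul_inv]
    have hp : 0 < LinearMap.det (A.restrictScalars ℝ) * σ ^ n :=
      mul_pos hDpos (pow_pos hσ n)
    rw [mul_comm (σ ^ n)] at hdet
    exact (one_lt_inv_iff₀.2 ⟨hp, hdet⟩)
  have : volume h.ball < volume k.ball := by
    calc volume h.ball = 1 * volume h.ball := (one_mul _).symm
      _ < ENNReal.ofReal ((LinearMap.det (A.restrictScalars ℝ))⁻¹ * c ^ (2 * n))
            * volume h.ball := by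
          apply (ENNReal.mul_lt_mul_iff_left (ne_of_gt hball_pos) (ne_of_lt hball_fin)).2
          exact ENNReal.one_lt_ofReal.2 hgt
      _ = volume k.ball := hvol.symm
  exact absurd hle (not_le.2 this)

lemma frontier_inter_nonempty {n : ℕ} (hn : 0 < n) {Ω : Set (Fin n → ℂ)}
    (hΩo : IsOpen Ω) (hΩb : IsBounded Ω)
    (h : PosDefHermForm n) (hsub : h.ball ⊆ Ω)
    (hmax : ∀ k : PosDefHermForm n, k.ball ⊆ Ω → volume k.ball ≤ volume h.ball) :
    (frontier Ω ∩ frontier h.ball).Nonempty := by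
  by_contra hemp
  rw [Set.not_nonempty_iff_eq_empty] at hemp
  have hclos : closure h.ball ⊆ Ω := by
    intro z hz
    have hle : (h.form z z).re ≤ 1 := by rw [h.closure_ball] at hz; exact hz
    rcases lt_or_eq_of_le hle with hlt | heq
    · exact hsub hlt
    · by_contra hzΩ
      have h1 : z ∈ closure Ω := closure_mono hsub hz
      have h2 : z ∈ frontier Ω := by
        rw [frontier, hΩo.interior_eq]
        exact ⟨h1, hzΩ⟩
      have h3 : z ∈ frontier h.ball := by rw [h.frontier_ball]; exact heq
      exact absurd hemp (Set.nonempty_iff_ne_empty.1 ⟨z, h2, h3⟩)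
  have hbdd : IsBounded h.ball := hΩb.subset hsub
  have hK : IsCompact (closure h.ball) :=
    Metric.isCompact_of_isClosed_isBounded isClosed_closure hbdd.closure
  obtain ⟨δ, hδ, hthick⟩ := hK.exists_cthickening_subset_open hΩo hclos
  obtain ⟨R, hR⟩ := hbdd.subset_closedBall 0
  set R' : ℝ := max R 1 with hR'
  have hR'pos : 0 < R' := lt_of_lt_of_le one_pos (le_max_right _ _)
  set s : ℝ := 1 + δ / (R' + 1) with hs
  have hs1 : 1 < s := by
    have h0 : 0 < δ / (R' + 1) := div_pos hδ (by linarith)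
    rw [hs]
    linarith
  have hspos : 0 < s := lt_trans one_pos hs1
  have hsmul : s • h.ball ⊆ Ω := by
    rintro z ⟨w, hw, rfl⟩
    have hdist : dist (s • w) w ≤ δ := by
      have h1 : s • w - w = (s - 1) • w := by
        rw [sub_smul, one_smul]
      rw [dist_eq_norm, h1, norm_smul]
      have hnw : ‖w‖ ≤ R' := by
        have := hR hw
        rw [Metric.mem_closedBall, dist_zero_right] at this
        exact le_trans this (le_max_left _ _)
      have h2 : |s - 1| = δ / (R' + 1) := by
        rw [hs]
        simp only [add_sub_cancel_left]
        exact abs_of_pos (div_pos hδ (by linarith))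
      rw [Real.norm_eq_abs, h2]
      calc δ / (R' + 1) * ‖w‖ ≤ δ / (R' + 1) * R' := by
            apply mul_le_mul_of_nonneg_left hnw (le_of_lt (div_pos hδ (by linarith)))
        _ ≤ δ := by
            rw [div_mul_eq_mul_div, div_le_iff₀ (by linarith : (0:ℝ) < R' + 1)]
            nlinarith
    exact hthick (Metric.mem_cthickening_of_dist_le (s • w) w δ _ (subset_closure hw) hdist)
  apply master hn hΩb h hsub hmax ((s ^ 2)⁻¹) (by positivity) LinearMap.id
    Function.injective_id
  · have hid : (LinearMap.id : (Fin n → ℂ) →ₗ[ℂ] (Fin n → ℂ)).restrictScalars ℝ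
        = LinearMap.id := rfl
    rw [hid, LinearMap.det_id]
    exact one_pos
  · intro z hz
    have : (h.form z z).re < s ^ 2 := by
      have hz' : (s ^ 2)⁻¹ * (h.form (LinearMap.id z) (LinearMap.id z)).re < 1 := hz
      simp only [LinearMap.id_apply] at hz'
      calc (h.form z z).re = s ^ 2 * ((s ^ 2)⁻¹ * (h.form z z).re) := by
            field_simp
        _ < s ^ 2 * 1 := by
            apply mul_lt_mul_of_pos_left hz' (by positivity)
        _ = s ^ 2 := mul_one _
    have : z ∈ s • h.ball := by
      rw [h.smul_ball s hspos]
      exact this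
    exact hsmul this
  · have hid : (LinearMap.id : (Fin n → ℂ) →ₗ[ℂ] (Fin n → ℂ)).restrictScalars ℝ
        = LinearMap.id := rfl
    rw [hid, LinearMap.det_id, mul_one]
    apply pow_lt_one₀ (by positivity) _ (Nat.pos_iff_ne_zero.1 hn)
    rw [inv_lt_one_iff₀]
    right
    nlinarith

namespace PosDefHermForm
variable {n : ℕ} (h : PosDefHermForm n)

lemma sub_left (a b w : Fin n → ℂ) : h.form (a - b) w = h.form a w - h.form b w := by
  rw [sub_eq_add_neg, ← neg_one_smul ℂ b, h.add_left, h.smul_left]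
  ring

lemma sub_right (z a b : Fin n → ℂ) : h.form z (a - b) = h.form z a - h.form z b := by
  rw [sub_eq_add_neg, ← neg_one_smul ℂ b, h.add_right, h.smul_right]
  simp only [map_neg, map_one, neg_one_mul]
  ring

lemma re_symm (z w : Fin n → ℂ) : (h.form z w).re = (h.form w z).re := by
  rw [h.conj_symm z w, Complex.conj_re]

lemma re_expand (t : ℝ) (z w : Fin n → ℂ) :
    (h.form (z - (t : ℂ) • w) (z - (t : ℂ) • w)).re
      = (h.form z z).re - 2 * t * (h.form w z).re + t ^ 2 * (h.form w w).re := by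
  rw [h.sub_left, h.sub_right, h.sub_right, h.smul_left, h.smul_left, h.smul_right,
    h.smul_right, Complex.conj_ofReal]
  have h1 : (h.form z w).re = (h.form w z).re := h.re_symm z w
  simp only [Complex.sub_re, Complex.re_ofReal_mul, Complex.mul_re, Complex.ofReal_re,
    Complex.ofReal_im]
  rw [h1]
  ring

lemma exists_bound (hn : 0 < n) (T : (Fin n → ℂ) →ₗ[ℂ] (Fin n → ℂ)) :
    ∃ M : ℝ, 0 < M ∧ ∀ z, |(h.form (T z) z).re| ≤ M * (h.form z z).re := by
  have hnt : Nontrivial (Fin n → ℂ) := by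
    refine ⟨0, Pi.single ⟨0, hn⟩ 1, ?_⟩
    intro hcon
    have := congrFun hcon ⟨0, hn⟩
    simp at this
  obtain ⟨u₀, hu₀⟩ := exists_norm_eq (Fin n → ℂ) (zero_le_one)
  have hTc : Continuous ⇑T := T.continuous_of_finiteDimensional
  have hS1 : IsCompact (Metric.sphere (0 : Fin n → ℂ) 1) := isCompact_sphere _ _
  have hne : (Metric.sphere (0 : Fin n → ℂ) 1).Nonempty := by
    exact ⟨u₀, by rwa [Metric.mem_sphere, dist_zero_right]⟩
  have hqpos : ∀ z ∈ Metric.sphere (0 : Fin n → ℂ) 1, 0 < (h.form z z).re := by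
    intro z hz
    apply h.posdef
    intro hz0
    rw [Metric.mem_sphere, dist_zero_right, hz0] at hz
    simp at hz
  have hgc : ContinuousOn (fun z => |(h.form (T z) z).re| / (h.form z z).re)
      (Metric.sphere (0 : Fin n → ℂ) 1) := by
    apply ContinuousOn.div
    · exact ((h.continuous_re_form hTc continuous_id).abs).continuousOn
    · exact (h.continuous_re_form continuous_id continuous_id).continuousOn
    · exact fun z hz => ne_of_gt (hqpos z hz)
  obtain ⟨u, huS, hu'⟩ := hS1.exists_isMaxOn hne hgc
  have hu : ∀ z ∈ Metric.sphere (0 : Fin n → ℂ) 1,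
      |(h.form (T z) z).re| / (h.form z z).re
        ≤ |(h.form (T u) u).re| / (h.form u u).re := fun z hz => hu' hz
  set M : ℝ := |(h.form (T u) u).re| / (h.form u u).re + 1 with hM
  have hMpos : 0 < M := by
    have h9 : 0 ≤ |(h.form (T u) u).re| / (h.form u u).re :=
      div_nonneg (abs_nonneg _) (hqpos u huS).le
    rw [hM]
    linarith
  refine ⟨M, hMpos, fun z => ?_⟩
  rcases eq_or_ne z 0 with rfl | hz
  · simp [h.zero_right]
  · set r : ℝ := ‖z‖ with hr
    have hrpos : 0 < r := norm_pos_iff.2 hz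
    set v : (Fin n → ℂ) := r⁻¹ • z with hv
    have hvS : v ∈ Metric.sphere (0 : Fin n → ℂ) 1 := by
      rw [Metric.mem_sphere, dist_zero_right, hv, norm_smul]
      simp [abs_of_pos (inv_pos.2 hrpos), hr]
      field_simp
    have hzv : z = r • v := by
      rw [hv, smul_inv_smul₀ (ne_of_gt hrpos)]
    have hTv : T (r • v) = r • T v := T.map_smul_of_tower r v
    have hb : (h.form (T z) z).re = r ^ 2 * (h.form (T v) v).re := by
      rw [hzv, hTv, h.re_smul_smul]
    have hq : (h.form z z).re = r ^ 2 * (h.form v v).re := by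
      rw [hzv, h.re_smul_smul]
    have hqv := hqpos v hvS
    have hbv : |(h.form (T v) v).re| ≤ (M - 1) * (h.form v v).re := by
      have h2 := hu v hvS
      have h3 := (div_le_iff₀ hqv).1 h2
      rw [hM]
      simp only [add_sub_cancel_right]
      linarith [h3]
    rw [hb, hq, abs_mul, _root_.abs_of_nonneg (sq_nonneg r)]
    calc r ^ 2 * |(h.form (T v) v).re| ≤ r ^ 2 * ((M - 1) * (h.form v v).re) := by
          apply mul_le_mul_of_nonneg_left hbv (sq_nonneg r)
      _ ≤ M * (r ^ 2 * (h.form v v).re) := by nlinarith [hqv, sq_nonneg r]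

end PosDefHermForm


/-- if `E_h` is a maximal-volume hermitian ellipsoid inscribed in
the bounded open `Ω`, then for every linear `T`,
`Re(tr T)/n ≤ max { Re h(Tz,z) : z ∈ ∂Ω ∩ ∂E_h }`. -/
theorem maximal_ellipsoid_trace_ineq {n : ℕ} (hn : 0 < n)
    (Ω : Set (Fin n → ℂ)) (hΩo : IsOpen Ω) (hΩb : IsBounded Ω)
    (h : PosDefHermForm n) (hsub : h.ball ⊆ Ω)
    (hmax : ∀ k : PosDefHermForm n, k.ball ⊆ Ω → volume k.ball ≤ volume h.ball)
    (T : (Fin n → ℂ) →ₗ[ℂ] (Fin n → ℂ)) :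
    ∃ z ∈ frontier Ω ∩ frontier h.ball,
      (LinearMap.trace ℂ (Fin n → ℂ) T).re / n ≤ (h.form (T z) z).re := by
  classical
  obtain ⟨z₀, hz₀⟩ := frontier_inter_nonempty hn hΩo hΩb h hsub hmax
  by_contra hcon
  push_neg at hcon
  have hnpos : (0:ℝ) < n := Nat.cast_pos.2 hn
  set c : ℝ := (LinearMap.trace ℂ (Fin n → ℂ) T).re / n with hc
  set S : Set (Fin n → ℂ) := frontier Ω ∩ frontier h.ball with hS
  set bf : (Fin n → ℂ) → ℝ := fun z => (h.form (T z) z).re with hbf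
  have hTcont : Continuous ⇑T := T.continuous_of_finiteDimensional
  have hbfc : Continuous bf := h.continuous_re_form hTcont continuous_id
  have hScomp : IsCompact S := by
    apply Metric.isCompact_of_isClosed_isBounded
    · exact isClosed_frontier.inter isClosed_frontier
    · exact hΩb.closure.subset fun z hz => frontier_subset_closure hz.1
  obtain ⟨zm, hzmS, hzm⟩ := hScomp.exists_isMaxOn ⟨z₀, hz₀⟩ hbfc.continuousOn
  set m : ℝ := bf zm with hm
  have hmc : m < c := hcon zm hzmS
  set γ' : ℝ := m + (c - m) / 3 with hγ'
  set γ : ℝ := m + 2 * (c - m) / 3 with hγ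
  have hmγ' : m < γ' := by rw [hγ']; linarith
  have hγ'γ : γ' < γ := by rw [hγ', hγ]; linarith
  have hγc : γ < c := by rw [hγ]; linarith
  obtain ⟨M, hMpos, hMb⟩ := h.exists_bound hn T
  set D : Set (Fin n → ℂ) :=
    Ωᶜ ∩ ({z | (h.form z z).re ≤ 2} ∩ {z | γ' ≤ bf z}) with hD
  have hq1 : ∀ z, z ∉ Ω → 1 ≤ (h.form z z).re := by
    intro z hz
    by_contra hlt
    push_neg at hlt
    exact hz (hsub hlt)
  have hDq : ∀ z ∈ D, 1 < (h.form z z).re := by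
    rintro z ⟨hz1, hz2, hz3⟩
    rcases lt_or_eq_of_le (hq1 z hz1) with hlt | heq
    · exact hlt
    · exfalso
      have hfr : z ∈ frontier h.ball := by rw [h.frontier_ball]; exact heq.symm
      have hcl : z ∈ closure Ω :=
        closure_mono hsub (by rw [h.closure_ball]; exact le_of_eq heq.symm)
      have hzS : z ∈ S := by
        refine ⟨?_, hfr⟩
        rw [frontier, hΩo.interior_eq]
        exact ⟨hcl, hz1⟩
      have h5 : bf z ≤ m := hzm hzS
      have h6 : γ' ≤ bf z := hz3
      linarith
  have hDcomp : IsCompact D := by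
    apply Metric.isCompact_of_isClosed_isBounded
    · exact (hΩo.isClosed_compl).inter
        ((isClosed_le (h.continuous_re_form continuous_id continuous_id) continuous_const).inter
          (isClosed_le continuous_const hbfc))
    · have hsub2 : D ⊆ Real.sqrt 2 • closure h.ball := by
        rintro z ⟨hz1, hz2, hz3⟩
        refine ⟨(Real.sqrt 2)⁻¹ • z, ?_, ?_⟩
        · rw [h.closure_ball]
          show (h.form _ _).re ≤ 1
          rw [h.re_smul_smul]
          have he : ((Real.sqrt 2)⁻¹) ^ 2 = 1 / 2 := by
            rw [inv_pow, Real.sq_sqrt (by norm_num : (0:ℝ) ≤ 2)]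
            norm_num
          rw [he]
          have : (h.form z z).re ≤ 2 := hz2
          linarith
        · show Real.sqrt 2 • (Real.sqrt 2)⁻¹ • z = z
          rw [smul_inv_smul₀ (by positivity : Real.sqrt 2 ≠ 0)]
      exact ((hΩb.subset hsub).closure.smul₀ (Real.sqrt 2)).subset hsub2
  have hεex : ∃ ε : ℝ, 0 < ε ∧ ε ≤ 1 ∧ ∀ z ∈ D, 1 + ε ≤ (h.form z z).re := by
    rcases D.eq_empty_or_nonempty with hDe | hDne
    · exact ⟨1, one_pos, le_refl 1, by rw [hDe]; simp⟩
    · obtain ⟨zd, hzdD, hzd⟩ := hDcomp.exists_isMinOn hDne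
        (h.continuous_re_form continuous_id continuous_id).continuousOn
      refine ⟨min ((h.form zd zd).re - 1) 1, ?_, min_le_right _ _, ?_⟩
      · exact lt_min (by linarith [hDq zd hzdD]) one_pos
      · intro z hzD
        have h1 : (h.form zd zd).re ≤ (h.form z z).re := hzd hzD
        have h2 := min_le_left ((h.form zd zd).re - 1) 1
        linarith
  obtain ⟨ε, hεpos, hε1, hεD⟩ := hεex
  set F := nhdsWithin (0:ℝ) (Set.Ioi (0:ℝ)) with hF
  set Tc := LinearMap.toContinuousLinearMap T with hTc
  have key0 : ∀ᶠ t in F, (0:ℝ) < t := eventually_mem_nhdsWithin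
  have key1 : ∀ᶠ t in F, t * ‖Tc‖ < 1 := by
    have hcont : Continuous (fun t : ℝ => t * ‖Tc‖) := by fun_prop
    have ht0 : Filter.Tendsto (fun t : ℝ => t * ‖Tc‖) (nhds 0) (nhds 0) := by
      have := hcont.tendsto 0
      simpa using this
    exact (ht0.eventually_lt_const one_pos).filter_mono nhdsWithin_le_nhds
  have key2 : ∀ᶠ t in F, 0 < Matrix.det (1 - t • Nmat T) := by
    have hcont := (hasDerivAt_det T).continuousAt
    have ht0 : Filter.Tendsto (fun t : ℝ => Matrix.det (1 - t • Nmat T)) (nhds 0) (nhds 1) := by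
      have := hcont.tendsto
      simpa using this
    exact (ht0.eventually_const_lt one_pos).filter_mono nhdsWithin_le_nhds
  have htrace : (LinearMap.trace ℂ (Fin n → ℂ) T).re = n * c := by
    rw [hc]
    field_simp
  have key3 : ∀ᶠ t in F, Real.exp (2 * (n:ℝ) * γ * t) * Matrix.det (1 - t • Nmat T) < 1 := by
    have hlin : HasDerivAt (fun t : ℝ => 2 * (n:ℝ) * γ * t) (2 * (n:ℝ) * γ) 0 := by
      simpa using (hasDerivAt_id (0:ℝ)).const_mul (2 * (n:ℝ) * γ)
    have hf := (hlin.exp).mul (hasDerivAt_det T)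
    have hf0 : Real.exp (2 * (n:ℝ) * γ * 0) * Matrix.det (1 - (0:ℝ) • Nmat T) = 1 := by simp
    have hneg : Real.exp (2 * (n:ℝ) * γ * 0) * (2 * (n:ℝ) * γ) * Matrix.det (1 - (0:ℝ) • Nmat T)
        + Real.exp (2 * (n:ℝ) * γ * 0) * (-(2 * (LinearMap.trace ℂ (Fin n → ℂ) T).re)) < 0 := by
      rw [htrace]
      simp only [mul_zero, Real.exp_zero, one_mul, zero_smul, sub_zero, Matrix.det_one, mul_one]
      nlinarith
    have hev := eventually_lt_of_hasDerivAt_neg hf hneg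
    simp only [Pi.mul_apply] at hev
    rw [hf0] at hev
    exact hev
  have key4 : ∀ᶠ t in F, 1 < Real.exp (2 * γ * t) * (1 - 2 * t * γ') := by
    have hlin : HasDerivAt (fun t : ℝ => 2 * γ * t) (2 * γ) 0 := by
      simpa using (hasDerivAt_id (0:ℝ)).const_mul (2 * γ)
    have hpoly : HasDerivAt (fun t : ℝ => 1 - 2 * t * γ') (-(2 * γ')) 0 := by
      have h1 : HasDerivAt (fun t : ℝ => 2 * t * γ') (2 * γ') 0 := by
        simpa using ((hasDerivAt_id (0:ℝ)).const_mul 2).mul_const γ'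
      simpa using h1.const_sub 1
    have hg := (hlin.exp).mul hpoly
    have hg0 : Real.exp (2 * γ * 0) * (1 - 2 * 0 * γ') = 1 := by simp
    have hpos : 0 < Real.exp (2 * γ * 0) * (2 * γ) * (1 - 2 * 0 * γ')
        + Real.exp (2 * γ * 0) * (-(2 * γ')) := by
      simp only [mul_zero, Real.exp_zero, one_mul, zero_mul, sub_zero]
      linarith
    have hev := eventually_gt_of_hasDerivAt_pos hg hpos
    simp only [Pi.mul_apply] at hev
    rw [hg0] at hev
    exact hev
  have key5 : ∀ᶠ t in F, 1 / (1 + ε) < Real.exp (2 * γ * t) * (1 - 2 * t * M) := by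
    have hcont : Continuous (fun t : ℝ => Real.exp (2 * γ * t) * (1 - 2 * t * M)) := by fun_prop
    have ht0 : Filter.Tendsto (fun t : ℝ => Real.exp (2 * γ * t) * (1 - 2 * t * M))
        (nhds 0) (nhds 1) := by
      have := hcont.tendsto 0
      simpa using this
    have hlt : 1 / (1 + ε) < 1 := by
      rw [div_lt_one (by linarith)]
      linarith
    exact (ht0.eventually_const_lt hlt).filter_mono nhdsWithin_le_nhds
  obtain ⟨t, ht0, ht1, ht2, ht3, ht4, ht5⟩ :=
    (key0.and (key1.and (key2.and (key3.and (key4.and key5))))).exists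
  set A : (Fin n → ℂ) →ₗ[ℂ] (Fin n → ℂ) := LinearMap.id - (t:ℂ) • T with hA
  have hAz : ∀ z, A z = z - (t:ℂ) • T z := fun z => rfl
  have hAinj : Function.Injective ⇑A := by
    intro x y hxy
    by_contra hne
    set u : (Fin n → ℂ) := x - y with hu
    have hzne : u ≠ 0 := sub_ne_zero.2 hne
    have hAxy : A u = 0 := by rw [hu, map_sub, hxy, sub_self]
    have heq : u = (t:ℂ) • T u := by
      have h7 := hAz u
      rw [hAxy] at h7
      have h8 := h7.symm
      rwa [sub_eq_zero] at h8
    have hnorm : ‖u‖ = |t| * ‖T u‖ := by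
      have h8 : ‖u‖ = ‖(t:ℂ) • T u‖ := congrArg norm heq
      rwa [norm_smul, Complex.norm_real, Real.norm_eq_abs] at h8
    have hTb : ‖T u‖ ≤ ‖Tc‖ * ‖u‖ := by
      have h9 := Tc.le_opNorm u
      rwa [show ⇑Tc = ⇑T from rfl] at h9
    have hxy0 : 0 < ‖u‖ := norm_pos_iff.2 hzne
    rw [abs_of_pos ht0] at hnorm
    have hTn : 0 ≤ ‖Tc‖ := norm_nonneg _
    nlinarith
  have hdetpos : 0 < LinearMap.det (A.restrictScalars ℝ) := by
    rw [hA, det_restrict_eq]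
    exact ht2
  apply master hn hΩb h hsub hmax (Real.exp (2 * γ * t)) (Real.exp_pos _) A hAinj hdetpos
  · intro z hz
    by_contra hzΩ
    have hzlt : Real.exp (2 * γ * t) * (h.form (A z) (A z)).re < 1 := hz
    have hexpand : (h.form (A z) (A z)).re
        = (h.form z z).re - 2 * t * bf z + t ^ 2 * (h.form (T z) (T z)).re := by
      rw [hAz z]
      exact h.re_expand t z (T z)
    have hq := hq1 z hzΩ
    have hr0 : 0 ≤ (h.form (T z) (T z)).re := h.re_nonneg _
    rcases lt_or_ge (bf z) γ' with hbz | hbz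
    · have hge : 1 - 2 * t * γ' ≤ (h.form (A z) (A z)).re := by
        rw [hexpand]
        nlinarith
      have hle2 : Real.exp (2 * γ * t) * (1 - 2 * t * γ')
          ≤ Real.exp (2 * γ * t) * (h.form (A z) (A z)).re :=
        mul_le_mul_of_nonneg_left hge (Real.exp_pos _).le
      linarith
    · have hqε : 1 + ε ≤ (h.form z z).re := by
        rcases le_or_gt (h.form z z).re 2 with hq2 | hq2
        · exact hεD z ⟨hzΩ, hq2, hbz⟩
        · linarith
      have h1M : 0 < 1 - 2 * t * M := by
        by_contra hcon2
        push_neg at hcon2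
        have hle3 : Real.exp (2 * γ * t) * (1 - 2 * t * M) ≤ 0 :=
          mul_nonpos_of_nonneg_of_nonpos (Real.exp_pos _).le hcon2
        have : 0 < 1 / (1 + ε) := by positivity
        linarith
      have hbM : bf z ≤ M * (h.form z z).re := le_trans (le_abs_self _) (hMb z)
      have hge : (1 + ε) * (1 - 2 * t * M) ≤ (h.form (A z) (A z)).re := by
        rw [hexpand]
        nlinarith
      have hle4 : Real.exp (2 * γ * t) * ((1 + ε) * (1 - 2 * t * M))
          ≤ Real.exp (2 * γ * t) * (h.form (A z) (A z)).re :=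
        mul_le_mul_of_nonneg_left hge (Real.exp_pos _).le
      have h6 : 1 < Real.exp (2 * γ * t) * ((1 + ε) * (1 - 2 * t * M)) := by
        have h7 := (div_lt_iff₀ (by linarith : (0:ℝ) < 1 + ε)).1 ht5
        nlinarith [Real.exp_pos (2 * γ * t)]
      linarith
  · have hpow : Real.exp (2 * γ * t) ^ n = Real.exp (2 * (n:ℝ) * γ * t) := by
      rw [← Real.exp_nat_mul]
      congr 1
      ring
    rw [hA, det_restrict_eq, hpow]
    exact ht3
end

section
/- Let λ > 1 and Ω = {z ∈ ℂ² : |z-p||z+p| < λ²} with p = (1,0). Then Ω is path-connected: for any z = (x,y) ∈ Ω and t ∈ [0,1], the point z_t = (Re x + it·Im x, t·y) satisfies |z_t - p| ≤ |z - p| and |z_t + p| ≤ |z + p|, hence z_t ∈ Ω; and Ω ∩ (ℝ×{0}) = (-√(λ²+1), √(λ²+1)) × {0} is connected. -/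
open Complex MeasureTheory Bornology

/-- Cassini ovaloid `{z ∈ ℂ² : |z-p||z+p| < λ²}`, `p = (1,0)`, written with
squared hermitian distances. -/
def cassini (lam : ℝ) : Set (ℂ × ℂ) :=
  {z | (Complex.normSq (z.1 - 1) + Complex.normSq z.2) *
       (Complex.normSq (z.1 + 1) + Complex.normSq z.2) < lam^4}


lemma cassini_real_mem (lam r : ℝ) (hlam : 1 < lam) :
    (((r:ℂ), (0:ℂ)) ∈ cassini lam) ↔ r^2 < lam^2 + 1 := by
  have h1 : Complex.normSq ((r:ℂ) - 1) = (r-1)^2 := by simp [Complex.normSq_apply]; ring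
  have h2 : Complex.normSq ((r:ℂ) + 1) = (r+1)^2 := by simp [Complex.normSq_apply]; ring
  simp only [cassini, Set.mem_setOf_eq, h1, h2, Complex.normSq_zero, add_zero]
  constructor
  · intro h; nlinarith [sq_nonneg r, sq_nonneg lam, sq_nonneg (r^2 - 1 + lam^2)]
  · intro h
    have h1 : 0 < lam^2 - (r^2 - 1) := by nlinarith
    have h2 : 0 < lam^2 + (r^2 - 1) := by nlinarith
    nlinarith [mul_pos h1 h2]

lemma cassini_key (lam : ℝ) (hlam : 1 < lam) :
    ∀ z ∈ cassini lam, ∀ t : ℝ, t ∈ Set.Icc (0:ℝ) 1 →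
      (Complex.normSq (((z.1.re : ℂ) + (t : ℂ) * z.1.im * Complex.I) - 1)
          + Complex.normSq ((t : ℂ) * z.2)
        ≤ Complex.normSq (z.1 - 1) + Complex.normSq z.2) ∧
      (Complex.normSq (((z.1.re : ℂ) + (t : ℂ) * z.1.im * Complex.I) + 1)
          + Complex.normSq ((t : ℂ) * z.2)
        ≤ Complex.normSq (z.1 + 1) + Complex.normSq z.2) ∧
      (((z.1.re : ℂ) + (t : ℂ) * z.1.im * Complex.I), (t : ℂ) * z.2) ∈ cassini lam := by
  rintro ⟨x, y⟩ hz t ⟨ht0, ht1⟩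
  simp only [cassini, Set.mem_setOf_eq] at hz ⊢
  have e1 : Complex.normSq (((x.re : ℂ) + (t : ℂ) * x.im * Complex.I) - 1)
      = (x.re - 1)^2 + (t * x.im)^2 := by simp [Complex.normSq_apply]; ring
  have e2 : Complex.normSq (((x.re : ℂ) + (t : ℂ) * x.im * Complex.I) + 1)
      = (x.re + 1)^2 + (t * x.im)^2 := by simp [Complex.normSq_apply]; ring
  have e3 : Complex.normSq ((t:ℂ) * y) = t^2 * Complex.normSq y := by
    simp [Complex.normSq_mul, Complex.normSq_apply]; ring
  have e4 : Complex.normSq (x - 1) = (x.re - 1)^2 + x.im^2 := by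
    simp [Complex.normSq_apply]; ring
  have e5 : Complex.normSq (x + 1) = (x.re + 1)^2 + x.im^2 := by
    simp [Complex.normSq_apply]; ring
  have hy : 0 ≤ Complex.normSq y := Complex.normSq_nonneg y
  have ht2 : t^2 ≤ 1 := by nlinarith
  have htim : (t * x.im)^2 ≤ x.im^2 := by nlinarith [sq_nonneg x.im]
  have I1 : (x.re - 1)^2 + (t * x.im)^2 + t^2 * Complex.normSq y
      ≤ (x.re - 1)^2 + x.im^2 + Complex.normSq y := by nlinarith
  have I2 : (x.re + 1)^2 + (t * x.im)^2 + t^2 * Complex.normSq y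
      ≤ (x.re + 1)^2 + x.im^2 + Complex.normSq y := by nlinarith
  refine ⟨by rw [e1, e3, e4]; linarith, by rw [e2, e3, e5]; linarith, ?_⟩
  rw [e1, e2, e3]
  rw [e4, e5] at hz
  have p1 : 0 ≤ (x.re - 1)^2 + (t * x.im)^2 + t^2 * Complex.normSq y := by positivity
  have p2 : 0 ≤ (x.re + 1)^2 + x.im^2 + Complex.normSq y := by positivity
  calc ((x.re - 1)^2 + (t * x.im)^2 + t^2 * Complex.normSq y) *
        ((x.re + 1)^2 + (t * x.im)^2 + t^2 * Complex.normSq y)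
      ≤ ((x.re - 1)^2 + x.im^2 + Complex.normSq y) *
        ((x.re + 1)^2 + x.im^2 + Complex.normSq y) := by
        apply mul_le_mul I1 I2 (by positivity) (by positivity)
    _ < lam^4 := hz

/-- for `λ > 1` the Cassini ovaloid is path-connected; the
deformation `z_t = (Re x + i t Im x, t y)` stays in `Ω` and decreases both
distances to `±p`, and the real slice is the interval `(-√(λ²+1), √(λ²+1))`. -/
theorem cassini_connected (lam : ℝ) (hlam : 1 < lam) :
    (∀ z ∈ cassini lam, ∀ t : ℝ, t ∈ Set.Icc (0:ℝ) 1 →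
      (Complex.normSq (((z.1.re : ℂ) + (t : ℂ) * z.1.im * Complex.I) - 1)
          + Complex.normSq ((t : ℂ) * z.2)
        ≤ Complex.normSq (z.1 - 1) + Complex.normSq z.2) ∧
      (Complex.normSq (((z.1.re : ℂ) + (t : ℂ) * z.1.im * Complex.I) + 1)
          + Complex.normSq ((t : ℂ) * z.2)
        ≤ Complex.normSq (z.1 + 1) + Complex.normSq z.2) ∧
      (((z.1.re : ℂ) + (t : ℂ) * z.1.im * Complex.I), (t : ℂ) * z.2) ∈ cassini lam) ∧
    {z ∈ cassini lam | z.1.im = 0 ∧ z.2 = 0}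
      = {z : ℂ × ℂ | z.2 = 0 ∧ z.1.im = 0 ∧ z.1.re^2 < lam^2 + 1} ∧
    IsPathConnected (cassini lam) := by
  refine ⟨cassini_key lam hlam, ?_, ?_⟩
  · ext z
    simp only [Set.mem_setOf_eq, Set.mem_sep_iff]
    constructor
    · rintro ⟨hmem, him, hy⟩
      refine ⟨hy, him, ?_⟩
      have hx : z.1 = (z.1.re : ℂ) := by
        apply Complex.ext <;> simp [him]
      rw [show z = ((z.1.re : ℂ), (0:ℂ)) by rw [Prod.ext_iff]; exact ⟨hx, hy⟩] at hmem
      exact (cassini_real_mem lam z.1.re hlam).1 hmem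
    · rintro ⟨hy, him, hlt⟩
      refine ⟨?_, him, hy⟩
      have hx : z.1 = (z.1.re : ℂ) := by apply Complex.ext <;> simp [him]
      rw [show z = ((z.1.re : ℂ), (0:ℂ)) by rw [Prod.ext_iff]; exact ⟨hx, hy⟩]
      exact (cassini_real_mem lam z.1.re hlam).2 hlt
  · have h0 : (0 : ℂ × ℂ) ∈ cassini lam := by
      have : ((((0:ℝ)):ℂ), (0:ℂ)) ∈ cassini lam :=
        (cassini_real_mem lam 0 hlam).2 (by nlinarith)
      convert this using 1; ext <;> simp
    refine ⟨0, h0, ?_⟩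
    intro z hz
    have hre : z.1.re^2 < lam^2 + 1 := by
      have := ((cassini_key lam hlam z hz 0 ⟨le_refl 0, zero_le_one⟩).2.2)
      simp only [Complex.ofReal_zero, zero_mul, mul_zero, add_zero] at this
      exact (cassini_real_mem lam z.1.re hlam).1 (by simpa using this)
    -- path from 0 to ((z.1.re : ℂ), 0)
    have j1 : JoinedIn (cassini lam) 0 ((z.1.re : ℂ), (0:ℂ)) := by
      refine ⟨⟨⟨fun s => (((s : ℝ) * z.1.re : ℝ), (0:ℂ)), ?_⟩, ?_, ?_⟩, ?_⟩
      · exact (Complex.continuous_ofReal.comp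
          (continuous_subtype_val.mul continuous_const)).prodMk continuous_const
      · simp
      · simp
      · intro s
        apply (cassini_real_mem lam _ hlam).2
        have hs0 : (0:ℝ) ≤ (s : ℝ) := s.2.1
        have hs1 : (s : ℝ) ≤ 1 := s.2.2
        have hs2 : (s:ℝ)^2 ≤ 1 := by nlinarith
        nlinarith [mul_le_mul_of_nonneg_right hs2 (sq_nonneg z.1.re)]
    have j2 : JoinedIn (cassini lam) ((z.1.re : ℂ), (0:ℂ)) z := by
      refine ⟨⟨⟨fun s => (((z.1.re : ℂ) + ((s:ℝ) : ℂ) * z.1.im * Complex.I),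
          ((s:ℝ) : ℂ) * z.2), ?_⟩, ?_, ?_⟩, ?_⟩
      · apply Continuous.prodMk
        · exact continuous_const.add (((Complex.continuous_ofReal.comp
            continuous_subtype_val).mul continuous_const).mul continuous_const)
        · exact (Complex.continuous_ofReal.comp continuous_subtype_val).mul continuous_const
      · simp
      · simp [Prod.ext_iff, Complex.re_add_im]
      · intro s
        exact (cassini_key lam hlam z hz (s:ℝ) s.2).2.2
    exact j1.trans j2
end
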